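/- arXiv:2104.03686 — 9 statements merged into one kernel-verified Lean document; each statement's English description precedes it below -/
import Mathlib

section
/- Let m ≥ 1 and let d ≥ 1 be an odd integer. If f ∈ ℂ[x_0,…,x_m] is homogeneous of degree d and all of its eigen-minors vanish identically, i.e. x_j·(∂f/∂x_i) = x_i·(∂f/∂x_j) as polynomials for all 0 ≤ i, j ≤ m, then f = 0. (This is the injectivity, for odd d, of the linear map φ : Sym^d ℂ^{m+1} → H^0(Q(d−1)) sending f to the section whose components are the eigen-minors of f.) -/
open MvPolynomial

private lemma X_mul_pderiv_monomial' {n : ℕ} (i : Fin n) (s : Fin n →₀ ℕ) (a : ℂ) :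
    X i * pderiv i (monomial s a) = (s i) • monomial s a := by
  rw [pderiv_monomial]
  rcases Nat.eq_zero_or_pos (s i) with h | h
  · simp [h]
  · have hs : Finsupp.single i 1 + (s - Finsupp.single i 1) = s := by
      ext j
      by_cases hj : j = i
      · subst hj; simp only [Finsupp.add_apply, Finsupp.single_eq_same, Finsupp.tsub_apply]
        omega
      · simp [Finsupp.single_apply, Ne.symm hj, hj]
    rw [X, monomial_mul, hs, one_mul, smul_monomial]
    congr 1
    rw [nsmul_eq_mul, mul_comm]

private lemma euler_id {n d : ℕ} (f : MvPolynomial (Fin n) ℂ) (hf : f.IsHomogeneous d) :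
    ∑ i, X i * pderiv i f = d • f := by
  conv_lhs => rw [f.as_sum]
  conv_rhs => rw [f.as_sum]
  simp_rw [map_sum, Finset.mul_sum]
  rw [Finset.sum_comm, Finset.smul_sum]
  refine Finset.sum_congr rfl fun s hs => ?_
  simp_rw [X_mul_pderiv_monomial']
  rw [← Finset.sum_smul]
  congr 1
  have hdeg : s.degree = d := by
    rw [Finsupp.degree_eq_weight_one]; exact hf (mem_support_iff.mp hs)
  rw [← hdeg, Finsupp.degree]
  exact (Finset.sum_subset (Finset.subset_univ s.support)
    (by intro x _ hx; simpa using Finsupp.notMem_support_iff.mp hx)).symm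

private lemma prime_X0 (m : ℕ) : Prime (X 0 : MvPolynomial (Fin (m+1)) ℂ) := by
  rw [← MulEquiv.prime_iff (MvPolynomial.finSuccEquiv ℂ m).toRingEquiv.toMulEquiv]
  simpa [finSuccEquiv_X_zero] using Polynomial.prime_X (R := MvPolynomial (Fin m) ℂ)

private lemma homog_factor {n a d : ℕ} (p h : MvPolynomial (Fin n) ℂ) (hp : p.IsHomogeneous a)
    (hp0 : p ≠ 0) (hph : (p * h).IsHomogeneous d) :
    (d < a ∧ h = 0) ∨ (a ≤ d ∧ h.IsHomogeneous (d - a)) := by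
  have key : ∀ k : ℕ, a + k ≠ d → homogeneousComponent k h = 0 := by
    intro k hk
    have hcomp : homogeneousComponent (a + k) (p * h) = p * homogeneousComponent k h := by
      conv_lhs => rw [← sum_homogeneousComponent h, Finset.mul_sum]
      rw [map_sum]
      have hterm : ∀ b : ℕ, homogeneousComponent (a + k) (p * homogeneousComponent b h)
          = if a + k = a + b then p * homogeneousComponent b h else 0 :=
        fun b => homogeneousComponent_of_mem
          ((mem_homogeneousSubmodule _ _).mpr (hp.mul (homogeneousComponent_isHomogeneous b h)))
      simp_rw [hterm, add_right_inj]
      rw [Finset.sum_ite_eq (Finset.range (h.totalDegree + 1))]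
      split_ifs with hmem
      · rfl
      · have hk' : h.totalDegree < k := by
          by_contra hc; exact hmem (Finset.mem_range.mpr (by omega))
        rw [homogeneousComponent_eq_zero _ h hk', mul_zero]
    have hzero : homogeneousComponent (a + k) (p * h) = 0 := by
      rw [homogeneousComponent_of_mem ((mem_homogeneousSubmodule _ _).mpr hph), if_neg hk]
    rw [hcomp] at hzero
    exact (mul_eq_zero.mp hzero).resolve_left hp0
  rcases lt_or_ge d a with hda | hda
  · refine Or.inl ⟨hda, ?_⟩
    calc h = ∑ k ∈ Finset.range (h.totalDegree + 1), homogeneousComponent k h :=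
          (sum_homogeneousComponent h).symm
      _ = 0 := Finset.sum_eq_zero fun k _ => key k (by omega)
  · refine Or.inr ⟨hda, ?_⟩
    have heq : h = homogeneousComponent (d - a) h := by
      conv_lhs => rw [← sum_homogeneousComponent h]
      refine Finset.sum_eq_single (d - a) (fun b _ hb => key b (by omega)) (fun hmem => ?_)
      refine homogeneousComponent_eq_zero _ h ?_
      by_contra hc; exact hmem (Finset.mem_range.mpr (by omega))
    rw [heq]
    exact homogeneousComponent_isHomogeneous (d - a) h

private lemma eigen_aux (m : ℕ) (hm : 1 ≤ m) : ∀ d : ℕ, 1 ≤ d → Odd d →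
    ∀ f : MvPolynomial (Fin (m+1)) ℂ, f.IsHomogeneous d →
    (∀ i j : Fin (m + 1), X j * pderiv i f = X i * pderiv j f) → f = 0 := by
  intro d
  induction d using Nat.strong_induction_on with
  | _ d ih =>
  intro hd hodd f hf hmin
  have hdC : (d : ℂ) ≠ 0 := Nat.cast_ne_zero.mpr (by omega)
  have hX0 : (X 0 : MvPolynomial (Fin (m+1)) ℂ) ≠ 0 := X_ne_zero 0
  have euler := euler_id f hf
  by_cases h0 : pderiv 0 f = 0
  · have hall : ∀ i, pderiv i f = 0 := by
      intro i
      have h := hmin i 0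
      rw [h0, mul_zero] at h
      exact (mul_eq_zero.mp h).resolve_left hX0
    have h1 : d • f = 0 := by
      rw [← euler]
      exact Finset.sum_eq_zero fun i _ => by rw [hall i, mul_zero]
    rw [← Nat.cast_smul_eq_nsmul ℂ] at h1
    exact (smul_eq_zero.mp h1).resolve_left hdC
  · set j1 : Fin (m+1) := ⟨1, by omega⟩ with hj1
    have h10 : j1 ≠ 0 := by
      intro hc
      have hc' := congrArg Fin.val hc
      simp [hj1] at hc'
    have hdvd : (X 0 : MvPolynomial (Fin (m+1)) ℂ) ∣ pderiv 0 f := by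
      have h01 : X j1 * pderiv 0 f = X 0 * pderiv j1 f := hmin 0 j1
      have hdd : (X 0 : MvPolynomial (Fin (m+1)) ℂ) ∣ X j1 * pderiv 0 f := ⟨pderiv j1 f, h01⟩
      rcases (prime_X0 m).2.2 _ _ hdd with hc | hc
      · exact absurd (X_dvd_X.mp hc).symm h10
      · exact hc
    obtain ⟨g, hg⟩ := hdvd
    have hderiv : ∀ i, pderiv i f = X i * g := by
      intro i
      have h := hmin i 0
      rw [hg] at h
      apply mul_left_cancel₀ hX0
      rw [h]; ring
    set q : MvPolynomial (Fin (m+1)) ℂ := ∑ i, X i ^ 2 with hq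
    have hqhom : q.IsHomogeneous 2 := IsHomogeneous.sum _ _ _ fun i _ => by
      simpa using isHomogeneous_X_pow i 2
    have hq0 : q ≠ 0 := by
      intro hc
      have h2 := congrArg (eval (fun _ => (1:ℂ))) hc
      simp [hq] at h2
      exact Nat.cast_add_one_ne_zero m h2
    have hfq : (d : ℂ) • f = q * g := by
      calc (d:ℂ) • f = ∑ i, X i * pderiv i f := by
            rw [euler, Nat.cast_smul_eq_nsmul]
        _ = ∑ i, X i ^ 2 * g := by
            refine Finset.sum_congr rfl fun i _ => by rw [hderiv i]; ring
        _ = q * g := by rw [hq, Finset.sum_mul]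
    have hfqh : f = q * ((d:ℂ)⁻¹ • g) := by
      rw [mul_smul_comm, ← hfq, smul_smul, inv_mul_cancel₀ hdC, one_smul]
    set h := (d:ℂ)⁻¹ • g with hh
    have hqh_hom : (q * h).IsHomogeneous d := hfqh ▸ hf
    rcases homog_factor q h hqhom hq0 hqh_hom with ⟨_, hzero⟩ | ⟨hle, hhom⟩
    · rw [hfqh, hzero, mul_zero]
    · have hpq : ∀ i, pderiv i q = 2 * X i := by
        intro i
        rw [hq, map_sum]
        rw [Finset.sum_eq_single i]
        · rw [pow_two, pderiv_mul, pderiv_X_self]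
          ring
        · intro j _ hj
          simp [pow_two, pderiv_mul, pderiv_X_of_ne hj]
        · intro hmem; exact absurd (Finset.mem_univ i) hmem
      have hdif : ∀ i, pderiv i f = 2 * X i * h + q * pderiv i h := by
        intro i
        rw [hfqh, pderiv_mul, hpq i]
      have hminh : ∀ i j : Fin (m+1), X j * pderiv i h = X i * pderiv j h := by
        intro i j
        have hmf := hmin i j
        rw [hdif i, hdif j] at hmf
        have e : q * (X j * pderiv i h) = q * (X i * pderiv j h) := by
          linear_combination hmf
        exact mul_left_cancel₀ hq0 e
      obtain ⟨k, hk⟩ := hodd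
      have hzero : h = 0 := ih (d - 2) (by omega) (by omega) ⟨k - 1, by omega⟩ h hhom hminh
      rw [hfqh, hzero, mul_zero]

theorem eigenminor_map_injective_odd (m d : ℕ) (hm : 1 ≤ m) (hd : 1 ≤ d) (hodd : Odd d)
    (f : MvPolynomial (Fin (m + 1)) ℂ) (hf : f.IsHomogeneous d)
    (hmin : ∀ i j : Fin (m + 1), X j * pderiv i f = X i * pderiv j f) :
    f = 0 :=
  eigen_aux m hm d hd hodd f hf hmin
end

section
/- Let m ≥ 1 and let d = 2e be an even positive integer. A homogeneous polynomial f ∈ ℂ[x_0,…,x_m] of degree d satisfies x_j·(∂f/∂x_i) = x_i·(∂f/∂x_j) as polynomials for all 0 ≤ i, j ≤ m if and only if f = c·q^e for some scalar c ∈ ℂ. Hence the kernel of the linear map f ↦ (M_{ij}(f))_{i,j} on degree-d forms is the one-dimensional span of q^{d/2}. -/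
open MvPolynomial

noncomputable section

lemma X_dvd_sub_aeval {σ : Type*} [DecidableEq σ] (i : σ) (p : MvPolynomial σ ℂ) :
    X i ∣ p - aeval (Function.update (X : σ → MvPolynomial σ ℂ) i 0) p := by
  induction p using MvPolynomial.induction_on with
  | C a => simp
  | add p q hp hq =>
      have : p + q - aeval (Function.update (X : σ → MvPolynomial σ ℂ) i 0) (p + q) =
          (p - aeval (Function.update (X : σ → MvPolynomial σ ℂ) i 0) p) + (q - aeval (Function.update (X : σ → MvPolynomial σ ℂ) i 0) q) := by
        rw [map_add]; ring
      rw [this]; exact dvd_add hp hq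
  | mul_X p j hp =>
      have : p * X j - aeval (Function.update (X : σ → MvPolynomial σ ℂ) i 0) (p * X j) =
          (p - aeval (Function.update (X : σ → MvPolynomial σ ℂ) i 0) p) * X j +
            aeval (Function.update (X : σ → MvPolynomial σ ℂ) i 0) p * (X j - aeval (Function.update (X : σ → MvPolynomial σ ℂ) i 0) ((X j : MvPolynomial σ ℂ))) := by
        rw [map_mul]; ring
      rw [this]
      refine dvd_add (Dvd.dvd.mul_right hp _) (Dvd.dvd.mul_left ?_ _)
      by_cases hji : j = i
      · subst hji; simp
      · simp [Function.update_of_ne hji]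

lemma X_dvd_of_aeval_eq_zero {σ : Type*} [DecidableEq σ] (i : σ) (p : MvPolynomial σ ℂ)
    (h : aeval (Function.update (X : σ → MvPolynomial σ ℂ) i 0) p = 0) : X i ∣ p := by
  have := X_dvd_sub_aeval i p
  rwa [h, sub_zero] at this

lemma pderiv_pderiv_comm {σ : Type*} [DecidableEq σ] (i j : σ) (f : MvPolynomial σ ℂ) :
    pderiv i (pderiv j f) = pderiv j (pderiv i f) := by
  induction f using MvPolynomial.induction_on' with
  | add p q hp hq => simp [hp, hq]
  | monomial s a =>
      simp only [pderiv_monomial]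
      by_cases hij : i = j
      · subst hij; rfl
      · have h1 : ((s - Finsupp.single j 1) : σ →₀ ℕ) i = s i := by
          simp [Finsupp.tsub_apply, Finsupp.single_apply, hij, Ne.symm hij]
        have h2 : ((s - Finsupp.single i 1) : σ →₀ ℕ) j = s j := by
          simp [Finsupp.tsub_apply, Finsupp.single_apply, hij, Ne.symm hij]
        rw [h1, h2, tsub_tsub, tsub_tsub, add_comm (Finsupp.single j 1)]
        ring_nf

lemma euler_identity {σ : Type*} [Fintype σ] [DecidableEq σ] {n : ℕ}
    {f : MvPolynomial σ ℂ} (hf : f.IsHomogeneous n) :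
    ∑ i, X i * pderiv i f = C (n : ℂ) * f := by
  have key : ∀ d ∈ f.support,
      ∑ i : σ, X i * pderiv i (monomial d (coeff d f)) = C (n : ℂ) * monomial d (coeff d f) := by
    intro d hd
    have hdeg : d.degree = n := by
      have := hf (mem_support_iff.mp hd)
      rwa [Finsupp.degree_eq_weight_one]
    have step : ∀ i : σ, X i * pderiv i (monomial d (coeff d f))
        = monomial d (coeff d f * d i) := by
      intro i
      rw [pderiv_monomial, X, monomial_mul, one_mul]
      by_cases h : d i = 0
      · simp [h]
      · congr 1
        have hle : Finsupp.single i 1 ≤ d := by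
          rw [Finsupp.single_le_iff]
          omega
        rw [add_tsub_cancel_of_le hle]
    have hsum : ∑ i : σ, d i = n := by
      rw [← hdeg, Finsupp.degree]
      exact (Finset.sum_subset (Finset.subset_univ _)
        (fun i _ hi => Finsupp.notMem_support_iff.mp hi)).symm
    calc ∑ i : σ, X i * pderiv i (monomial d (coeff d f))
        = ∑ i : σ, monomial d (coeff d f * d i) := Finset.sum_congr rfl fun i _ => step i
      _ = monomial d (∑ i : σ, coeff d f * (d i : ℂ)) := by
          rw [← map_sum (monomial d)]
      _ = C (n : ℂ) * monomial d (coeff d f) := by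
          rw [C_mul_monomial, ← Finset.mul_sum, ← Nat.cast_sum, hsum, mul_comm]
  calc ∑ i : σ, X i * pderiv i f
      = ∑ i : σ, ∑ d ∈ f.support, X i * pderiv i (monomial d (coeff d f)) := by
        refine Finset.sum_congr rfl fun i _ => ?_
        conv_lhs => rw [f.as_sum]
        rw [map_sum, Finset.mul_sum]
    _ = ∑ d ∈ f.support, ∑ i : σ, X i * pderiv i (monomial d (coeff d f)) := Finset.sum_comm
    _ = ∑ d ∈ f.support, C (n : ℂ) * monomial d (coeff d f) := Finset.sum_congr rfl key
    _ = C (n : ℂ) * f := by rw [← Finset.mul_sum, ← f.as_sum]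

lemma isHomogeneous_of_mul_left {σ : Type*} {p h : MvPolynomial σ ℂ} {a b : ℕ}
    (hp : p.IsHomogeneous a) (hp0 : p ≠ 0) (hmul : (p * h).IsHomogeneous (a + b)) :
    h.IsHomogeneous b := by
  have hcomp : ∀ k, k ≠ b → homogeneousComponent k h = 0 := by
    intro k hk
    by_cases hkle : k ≤ h.totalDegree
    · have hdecomp : p * h = ∑ j ∈ Finset.range (h.totalDegree + 1),
          p * homogeneousComponent j h := by
        rw [← Finset.mul_sum, sum_homogeneousComponent]
      have hzero : homogeneousComponent (a + k) (p * h) = 0 := by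
        rw [homogeneousComponent_of_mem ((mem_homogeneousSubmodule _ _).mpr hmul),
          if_neg (by omega)]
      have : homogeneousComponent (a + k) (p * h) = p * homogeneousComponent k h := by
        rw [hdecomp, map_sum]
        rw [Finset.sum_eq_single k]
        · rw [homogeneousComponent_of_mem ((mem_homogeneousSubmodule _ _).mpr
            (hp.mul (homogeneousComponent_isHomogeneous k h))), if_pos rfl]
        · intro j _ hj
          rw [homogeneousComponent_of_mem ((mem_homogeneousSubmodule _ _).mpr
            (hp.mul (homogeneousComponent_isHomogeneous j h))), if_neg (by omega)]
        · intro hknot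
          exact absurd (Finset.mem_range.mpr (by omega)) hknot
      rw [this] at hzero
      exact (mul_eq_zero.mp hzero).resolve_left hp0
    · exact homogeneousComponent_eq_zero k h (by omega)
  have : h = homogeneousComponent b h := by
    conv_lhs => rw [← sum_homogeneousComponent h]
    rw [Finset.sum_eq_single b (fun j _ hj => hcomp j hj)
      (fun hb => homogeneousComponent_eq_zero b h (by have := Finset.mem_range.not.mp hb; omega))]
  rw [this]
  exact homogeneousComponent_isHomogeneous b h

lemma key_lemma (m : ℕ) (hm : 1 ≤ m) (e : ℕ) :
    ∀ (f : MvPolynomial (Fin (m + 1)) ℂ), f.IsHomogeneous (2 * e) →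
      (∀ i j : Fin (m + 1), X j * pderiv i f = X i * pderiv j f) →
      ∃ c : ℂ, f = C c * (∑ i : Fin (m + 1), X i ^ 2) ^ e := by
  induction e with
  | zero =>
      intro f hf _
      refine ⟨coeff 0 f, ?_⟩
      have h0 : homogeneousComponent 0 f = f := by
        rw [homogeneousComponent_of_mem ((mem_homogeneousSubmodule _ _).mpr
          (show f.IsHomogeneous 0 by simpa using hf)), if_pos rfl]
      rw [pow_zero, mul_one]
      conv_lhs => rw [← h0, homogeneousComponent_zero]
  | succ e ih =>
      intro f hf hcond
      set q : MvPolynomial (Fin (m + 1)) ℂ := ∑ i : Fin (m + 1), X i ^ 2 with hqdef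
      have i0 : Fin (m + 1) := 0
      set i1 : Fin (m + 1) := ⟨1, by omega⟩ with hi1
      have hne : i1 ≠ (0 : Fin (m + 1)) := by
        intro hcontra
        have := congrArg Fin.val hcontra
        simp [hi1] at this
      set φ : MvPolynomial (Fin (m+1)) ℂ →ₐ[ℂ] MvPolynomial (Fin (m+1)) ℂ := aeval (Function.update (X : Fin (m+1) → MvPolynomial (Fin (m+1)) ℂ) 0 0) with hφ
      have hφ0 : φ (X (0 : Fin (m+1))) = 0 := by simp [hφ]
      have hφ1 : φ (X i1) = X i1 := by
        rw [hφ, aeval_X, Function.update_of_ne hne]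
      have h1 : φ (pderiv (0 : Fin (m+1)) f) = 0 := by
        have hc := congrArg φ (hcond 0 i1)
        rw [map_mul, map_mul, hφ0, hφ1, zero_mul] at hc
        exact (mul_eq_zero.mp hc).resolve_left (X_ne_zero i1)
      obtain ⟨h, hh⟩ := X_dvd_of_aeval_eq_zero 0 (pderiv (0 : Fin (m+1)) f) h1
      have hall : ∀ i, pderiv i f = X i * h := by
        intro i
        have h2 := hcond i 0
        rw [hh] at h2
        apply mul_left_cancel₀ (X_ne_zero (0 : Fin (m+1)))
        rw [h2]; ring
      have heuler := euler_identity hf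
      rw [Finset.sum_congr rfl (fun i _ => by rw [hall i])] at heuler
      have hq : (∑ i : Fin (m+1), X i * (X i * h)) = q * h := by
        rw [hqdef, Finset.sum_mul]
        exact Finset.sum_congr rfl fun i _ => by ring
      rw [hq] at heuler
      have hne2 : ((2 * (e + 1) : ℕ) : ℂ) ≠ 0 := by
        rw [Nat.cast_ne_zero]; omega
      have hq_hom : q.IsHomogeneous 2 := by
        rw [hqdef]
        exact IsHomogeneous.sum _ _ _ fun i _ => isHomogeneous_X_pow i 2
      have hq0 : q ≠ 0 := by
        intro h0
        have hev := congrArg (eval (fun _ : Fin (m+1) => (1 : ℂ))) h0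
        simp [hqdef] at hev
        have : (m + 1 : ℕ) = 0 := by exact_mod_cast hev
        omega
      have hqh_hom : (q * h).IsHomogeneous (2 + 2 * e) := by
        rw [heuler]
        have := hf.C_mul (((2 * (e + 1) : ℕ) : ℂ))
        convert this using 1
        ring
      have hh_hom : h.IsHomogeneous (2 * e) := isHomogeneous_of_mul_left hq_hom hq0 hqh_hom
      have hcond_h : ∀ i j : Fin (m+1), X j * pderiv i h = X i * pderiv j h := by
        intro i j
        have e1 : pderiv j (X i * h) = pderiv i (X j * h) := by
          rw [← hall i, ← hall j, pderiv_pderiv_comm]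
        rw [pderiv_mul, pderiv_mul] at e1
        have e2 : (pderiv j (X i) : MvPolynomial (Fin (m+1)) ℂ) = pderiv i (X j) := by
          by_cases hij : i = j
          · subst hij; rfl
          · rw [pderiv_X_of_ne (Ne.symm hij), pderiv_X_of_ne hij]
        rw [← e2] at e1
        exact (add_left_cancel e1).symm
      obtain ⟨c, hc⟩ := ih h hh_hom hcond_h
      refine ⟨(((2 * (e + 1) : ℕ) : ℂ))⁻¹ * c, ?_⟩
      have hf_eq : f = C ((((2 * (e + 1) : ℕ) : ℂ))⁻¹) * (q * h) := by
        rw [heuler, ← mul_assoc, ← C_mul, inv_mul_cancel₀ hne2, C_1, one_mul]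
      rw [hf_eq, hc, C_mul, pow_succ]
      ring

theorem eigenminor_kernel_even (m e : ℕ) (hm : 1 ≤ m) (he : 1 ≤ e)
    (f : MvPolynomial (Fin (m + 1)) ℂ) (hf : f.IsHomogeneous (2 * e)) :
    (∀ i j : Fin (m + 1), X j * pderiv i f = X i * pderiv j f) ↔
      ∃ c : ℂ, f = C c * (∑ i : Fin (m + 1), X i ^ 2) ^ e := by
  constructor
  · exact key_lemma m hm e f hf
  · rintro ⟨c, rfl⟩ i j
    set q : MvPolynomial (Fin (m + 1)) ℂ := ∑ i : Fin (m + 1), X i ^ 2 with hqdef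
    have hq' : ∀ i : Fin (m+1), pderiv i q = 2 * X i := by
      intro i
      rw [hqdef, map_sum, Finset.sum_eq_single i]
      · rw [pderiv_pow, pderiv_X_self, pow_one]; push_cast; ring
      · intro k _ hk
        rw [pderiv_pow, pderiv_X_of_ne hk, mul_zero]
      · intro hcontra
        exact absurd (Finset.mem_univ i) hcontra
    rw [pderiv_C_mul, pderiv_C_mul, pderiv_pow, pderiv_pow, hq' i, hq' j]
    ring
end
end

section
/- Let m ≥ 1, let a ≥ 1 and e ≥ 0 be integers, and let g := (x_0 + i·x_1)^a · q^e ∈ ℂ[x_0,…,x_m], where i is the imaginary unit. Then x_1·(∂g/∂x_0) − x_0·(∂g/∂x_1) = a·(x_0 + i·x_1)^{a−1}·(x_1 − i·x_0)·q^e, and this polynomial is not identically zero. -/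
open MvPolynomial

theorem eigenminor_of_power_nonzero (m a e : ℕ) (hm : 1 ≤ m) (ha : 1 ≤ a) :
    letI q : MvPolynomial (Fin (m + 1)) ℂ := ∑ i : Fin (m + 1), X i ^ 2
    letI g : MvPolynomial (Fin (m + 1)) ℂ :=
      (X 0 + C Complex.I * X 1) ^ a * q ^ e
    X (1 : Fin (m + 1)) * pderiv (0 : Fin (m + 1)) g
        - X (0 : Fin (m + 1)) * pderiv (1 : Fin (m + 1)) g =
      C (a : ℂ) * (X 0 + C Complex.I * X 1) ^ (a - 1)
        * (X 1 - C Complex.I * X 0) * q ^ e ∧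
    C (a : ℂ) * (X 0 + C Complex.I * X 1) ^ (a - 1)
        * (X 1 - C Complex.I * X 0) * q ^ e ≠ 0 := by
  set q : MvPolynomial (Fin (m+1)) ℂ := ∑ i : Fin (m+1), X i ^ 2 with hqdef
  have hm0 : m ≠ 0 := by omega
  have h1v : (1 : Fin (m+1)).val = 1 := by
    rw [Fin.val_one']; exact Nat.mod_eq_of_lt (by omega)
  have h01 : (0 : Fin (m+1)) ≠ 1 := by
    intro h; rw [Fin.ext_iff, h1v] at h; simp at h
  set L : MvPolynomial (Fin (m+1)) ℂ := X 0 + C Complex.I * X 1 with hL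
  have hdq : ∀ j : Fin (m+1), pderiv j q = 2 * X j := by
    intro j
    rw [hqdef, map_sum, Finset.sum_eq_single j]
    · rw [Derivation.leibniz_pow, pderiv_X_self, smul_eq_mul, mul_one, nsmul_eq_mul,
        pow_one, Nat.cast_ofNat]
    · intro i _ hij
      rw [Derivation.leibniz_pow, pderiv_X_of_ne hij, smul_zero, smul_zero]
    · simp
  have hdL0 : pderiv (0 : Fin (m+1)) L = 1 := by
    rw [hL]; simp [pderiv_X_self, pderiv_X_of_ne h01.symm]
  have hdL1 : pderiv (1 : Fin (m+1)) L = C Complex.I := by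
    rw [hL]; simp [pderiv_X_self, pderiv_X_of_ne h01]
  have hda : ∀ j : Fin (m+1), pderiv j (L ^ a * q ^ e) =
      C (a:ℂ) * L ^ (a-1) * pderiv j L * q ^ e + L ^ a * (C (e:ℂ) * q ^ (e-1) * pderiv j q) := by
    intro j
    rw [Derivation.leibniz, Derivation.leibniz_pow, Derivation.leibniz_pow]
    simp only [smul_eq_mul, nsmul_eq_mul]
    rw [show ((a:MvPolynomial (Fin (m+1)) ℂ)) = C (a:ℂ) by simp,
        show ((e:MvPolynomial (Fin (m+1)) ℂ)) = C (e:ℂ) by simp]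
    ring
  constructor
  · rw [hda 0, hda 1, hdL0, hdL1, hdq 0, hdq 1]
    ring
  · have hL0 : L ≠ 0 := by
      intro h
      have := congrArg (fun p => coeff (Finsupp.single (0 : Fin (m+1)) 1) p) h
      simp [hL, coeff_X', Finsupp.single_eq_single_iff, h01, hm0, Fin.ext_iff, h1v] at this
    have hM : (X 1 - C Complex.I * X 0 : MvPolynomial (Fin (m+1)) ℂ) ≠ 0 := by
      intro h
      have := congrArg (fun p => coeff (Finsupp.single (1 : Fin (m+1)) 1) p) h
      simp [coeff_X', Finsupp.single_eq_single_iff, h01, hm0, Fin.ext_iff, h1v] at this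
    have hq : q ≠ 0 := by
      intro h
      have hc : coeff (Finsupp.single (0 : Fin (m+1)) 2) q = 1 := by
        rw [hqdef, coeff_sum, Finset.sum_eq_single (0 : Fin (m+1))]
        · simp [coeff_X_pow]
        · intro i _ hi
          simp [coeff_X_pow, Finsupp.single_eq_single_iff, hi]
        · simp
      rw [h] at hc
      simp at hc
    have hCa : (C (a:ℂ) : MvPolynomial (Fin (m+1)) ℂ) ≠ 0 := by
      simp only [ne_eq, C_eq_zero, Nat.cast_eq_zero]; omega
    exact mul_ne_zero (mul_ne_zero (mul_ne_zero hCa (pow_ne_zero _ hL0)) hM) (pow_ne_zero _ hq)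
end

section
/- Let k ≥ 1, let m_1,…,m_k ≥ 1, and let d_1,…,d_k ≥ 1 be integers with d_i odd for at least one index i. If T is a multihomogeneous polynomial of multidegree (d_1,…,d_k) such that for every group l and all indices 0 ≤ i, j ≤ m_l one has x_{l,j}·(∂T/∂x_{l,i}) = x_{l,i}·(∂T/∂x_{l,j}) as polynomials, then T = 0. (This is the injectivity of the linear map φ : Sym^{d_1}V_1⊗⋯⊗Sym^{d_k}V_k → H^0(𝓔) when some d_i is odd.) -/
open MvPolynomial

lemma my_coeff_pderiv {σ : Type*} (a : σ) (p : MvPolynomial σ ℂ) (u : σ →₀ ℕ) :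
    coeff u (pderiv a p) = (u a + 1 : ℂ) * coeff (u + Finsupp.single a 1) p := by
  classical
  induction p using MvPolynomial.induction_on' with
  | monomial s r =>
    rw [pderiv_monomial]
    rcases Nat.eq_zero_or_pos (s a) with h0 | hpos
    · have h1 : s ≠ u + Finsupp.single a 1 := by
        intro h; rw [h] at h0; simp at h0
      rw [coeff_monomial, coeff_monomial, if_neg h1]
      split_ifs with h2
      · simp [h0]
      · ring
    · have hle : Finsupp.single a 1 ≤ s := by
        rw [Finsupp.single_le_iff]; omega
      have key : s - Finsupp.single a 1 = u ↔ s = u + Finsupp.single a 1 :=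
        tsub_eq_iff_eq_add_of_le hle
      rw [coeff_monomial, coeff_monomial]
      by_cases h2 : s - Finsupp.single a 1 = u
      · rw [if_pos h2, if_pos (key.mp h2)]
        have : s a = u a + 1 := by rw [key.mp h2]; simp
        rw [this]; push_cast; ring
      · rw [if_neg h2, if_neg (fun h => h2 (key.mpr h))]; ring
  | add p q hp hq =>
    simp [map_add, coeff_add, hp, hq, mul_add]

/-- From `X b * ∂ₐ T = X a * ∂_b T` (a ≠ b): coefficients with exponent 1 at `a` vanish,
and the "slide" relation. -/
lemma my_key {σ : Type*} [DecidableEq σ] {a b : σ} (hab : a ≠ b)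
    (T : MvPolynomial σ ℂ)
    (h : X b * pderiv a T = X a * pderiv b T) :
    (∀ u : σ →₀ ℕ, u a = 0 → coeff (u + Finsupp.single a 1) T = 0) ∧
    (∀ v : σ →₀ ℕ,
      ((v a : ℂ) + 2) * coeff (v + Finsupp.single a 1 + Finsupp.single a 1) T =
      ((v b : ℂ) + 2) * coeff (v + Finsupp.single b 1 + Finsupp.single b 1) T) := by
  have key : ∀ u : σ →₀ ℕ,
      ((u a : ℂ) + 1) * coeff (u + Finsupp.single a 1) T =
      if u a ≠ 0 then ((u b : ℂ) + 2) *
        coeff (u + Finsupp.single b 1 - Finsupp.single a 1 + Finsupp.single b 1) T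
      else 0 := by
    intro u
    have := congrArg (coeff (Finsupp.single b 1 + u)) h
    rw [coeff_X_mul, my_coeff_pderiv, coeff_X_mul'] at this
    have hsupp : a ∈ (Finsupp.single b 1 + u).support ↔ u a ≠ 0 := by
      simp [Finsupp.single_apply, hab.symm]
    rw [this]
    by_cases hu : u a ≠ 0
    · rw [if_pos (hsupp.mpr hu), if_pos hu, my_coeff_pderiv]
      have e1 : Finsupp.single b 1 + u - Finsupp.single a 1
          = u + Finsupp.single b 1 - Finsupp.single a 1 := by rw [add_comm]
      have e2 : (Finsupp.single b 1 + u - Finsupp.single a 1 : σ →₀ ℕ) b = u b + 1 := by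
        simp [Finsupp.tsub_apply, Finsupp.single_apply, hab]; omega
      rw [e2, e1]; push_cast; ring
    · rw [if_neg (fun hh => hu (hsupp.mp hh)), if_neg hu]
  constructor
  · intro u hu
    have := key u
    rw [if_neg (by simp [hu]), hu] at this
    simpa using this
  · intro v
    have := key (v + Finsupp.single a 1)
    have ha : (v + Finsupp.single a 1 : σ →₀ ℕ) a = v a + 1 := by simp
    have hb : (v + Finsupp.single a 1 : σ →₀ ℕ) b = v b := by
      simp [Finsupp.single_apply, hab]
    rw [if_pos (by omega), ha, hb] at this
    have e3 : v + Finsupp.single a 1 + Finsupp.single b 1 - Finsupp.single a 1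
        = v + Finsupp.single b 1 := by
      rw [add_right_comm, add_tsub_cancel_right]
    rw [e3] at this
    push_cast at this
    have e4 : ((v a : ℂ) + 1 + 1) = (v a : ℂ) + 2 := by ring
    rw [e4] at this
    exact this

theorem multi_eigenminor_map_injective_some_odd (k : ℕ) (hk : 1 ≤ k)
    (m d : Fin k → ℕ) (hm : ∀ l, 1 ≤ m l) (hd : ∀ l, 1 ≤ d l)
    (hodd : ∃ i, Odd (d i))
    (T : MvPolynomial (Σ l : Fin k, Fin (m l + 1)) ℂ)
    (hT : ∀ s ∈ T.support, ∀ l : Fin k, (∑ i : Fin (m l + 1), s ⟨l, i⟩) = d l)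
    (hmin : ∀ (l : Fin k) (i j : Fin (m l + 1)),
      X (⟨l, j⟩ : Σ l : Fin k, Fin (m l + 1)) * pderiv (⟨l, i⟩ : Σ l : Fin k, Fin (m l + 1)) T =
      X (⟨l, i⟩ : Σ l : Fin k, Fin (m l + 1)) * pderiv (⟨l, j⟩ : Σ l : Fin k, Fin (m l + 1)) T) :
    T = 0 := by
  classical
  -- main claim: coeff vanishes whenever some exponent is odd
  have claim : ∀ (a b : Σ l : Fin k, Fin (m l + 1)), a ≠ b → a.1 = b.1 →
      ∀ (n : ℕ) (t : (Σ l : Fin k, Fin (m l + 1)) →₀ ℕ), t a = 2 * n + 1 →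
      coeff t T = 0 := by
    intro a b hab hl1
    obtain ⟨l, i⟩ := a
    obtain ⟨l', j⟩ := b
    cases hl1
    obtain ⟨hz, hslide⟩ := my_key hab T (hmin l i j)
    intro n
    induction n with
    | zero =>
      intro t ht
      have hle : Finsupp.single (⟨l, i⟩ : Σ l : Fin k, Fin (m l + 1)) 1 ≤ t := by
        rw [Finsupp.single_le_iff]; omega
      have := hz (t - Finsupp.single ⟨l, i⟩ 1) (by simp [Finsupp.tsub_apply, ht])
      rwa [tsub_add_cancel_of_le hle] at this
    | succ n ih =>
      intro t ht
      set a : Σ l : Fin k, Fin (m l + 1) := ⟨l, i⟩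
      set b : Σ l : Fin k, Fin (m l + 1) := ⟨l, j⟩
      have hle : Finsupp.single a 1 + Finsupp.single a 1 ≤ t := by
        rw [← Finsupp.single_add, Finsupp.single_le_iff]; omega
      set v := t - (Finsupp.single a 1 + Finsupp.single a 1) with hv
      have hvt : v + Finsupp.single a 1 + Finsupp.single a 1 = t := by
        rw [add_assoc, hv, tsub_add_cancel_of_le hle]
      have hva : v a = 2 * n + 1 := by
        rw [hv]
        simp only [Finsupp.tsub_apply, Finsupp.add_apply, Finsupp.single_eq_same, ht]
        omega
      have hvb : (v + Finsupp.single b 1 + Finsupp.single b 1 :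
          (Σ l : Fin k, Fin (m l + 1)) →₀ ℕ) a = 2 * n + 1 := by
        simp only [Finsupp.add_apply, Finsupp.single_apply, if_neg hab.symm, hva]; omega
      have := hslide v
      rw [hvt, ih _ hvb, mul_zero] at this
      have hne : ((v a : ℂ) + 2) ≠ 0 := by
        have h2 : ((v a + 2 : ℕ) : ℂ) ≠ 0 := Nat.cast_ne_zero.mpr (by omega)
        push_cast at h2; exact h2
      exact (mul_eq_zero.mp this).resolve_left hne
  -- finish
  rw [MvPolynomial.eq_zero_iff]
  intro s
  by_contra hs
  have hsupp : s ∈ T.support := MvPolynomial.mem_support_iff.mpr hs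
  obtain ⟨l, hdl⟩ := hodd
  have hsum := hT s hsupp l
  have : ∃ i : Fin (m l + 1), Odd (s ⟨l, i⟩) := by
    by_contra hall
    push_neg at hall
    simp only [Nat.not_odd_iff_even] at hall
    have : Even (∑ i : Fin (m l + 1), s ⟨l, i⟩) :=
      Finset.even_sum _ (fun i _ => hall i)
    rw [hsum] at this
    exact (Nat.not_even_iff_odd.mpr hdl) this
  obtain ⟨i, hi⟩ := this
  set j : Fin (m l + 1) := if i = ⟨0, by omega⟩ then ⟨1, by have := hm l; omega⟩
    else ⟨0, by omega⟩ with hj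
  have hij : i ≠ j := by
    rw [hj]; split_ifs with h
    · rw [h]; intro hh; exact absurd (congrArg Fin.val hh) (by simp)
    · exact h
  have hab : (⟨l, i⟩ : Σ l : Fin k, Fin (m l + 1)) ≠ ⟨l, j⟩ := by
    intro hh
    exact hij (eq_of_heq (Sigma.mk.inj_iff.mp hh).2)
  obtain ⟨n, hn⟩ := hi
  exact hs (claim ⟨l, i⟩ ⟨l, j⟩ hab rfl n s hn)
end

section
/- Let k ≥ 1, let m_1,…,m_k ≥ 1, and suppose every d_l = 2e_l is even and positive. A multihomogeneous polynomial T of multidegree (d_1,…,d_k) satisfies x_{l,j}·(∂T/∂x_{l,i}) = x_{l,i}·(∂T/∂x_{l,j}) as polynomials for every group l and all indices i, j if and only if T = c·q_1^{e_1}·q_2^{e_2}⋯q_k^{e_k} for some scalar c ∈ ℂ. Hence the kernel of the linear map T ↦ (M^l_{ij}(T)) is the one-dimensional span of q_1^{d_1/2}⊗⋯⊗q_k^{d_k/2}. -/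
open MvPolynomial Finsupp

section Aux

variable {σ : Type*} {R : Type*} [CommRing R]

private theorem aux_X_mul_pderiv_monomial (v : σ) (s : σ →₀ ℕ) (a : R) :
    X v * pderiv v (monomial s a) = monomial s (a * s v) := by
  classical
  rw [pderiv_monomial]
  rcases eq_or_ne (s v) 0 with h | h
  · simp [h]
  · have hs : Finsupp.single v 1 + (s - Finsupp.single v 1) = s := by
      ext u
      rcases eq_or_ne u v with rfl | hu
      · simp only [Finsupp.add_apply, Finsupp.tsub_apply, Finsupp.single_eq_same]
        omega
      · simp [Finsupp.single_apply, Ne.symm hu]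
    rw [X, monomial_mul, one_mul, hs]

private theorem aux_X_dvd (v : σ) (p : MvPolynomial σ R) (h : ∀ d ∈ p.support, d v ≠ 0) :
    X v ∣ p := by
  classical
  rw [p.as_sum]
  apply Finset.dvd_sum
  intro d hd
  rw [X_dvd_monomial]
  exact Or.inr (h d hd)

private theorem aux_iwh_div {w : σ → ℕ} {q S : MvPolynomial σ ℂ} {a n : ℕ}
    (hq : q ≠ 0) (hqa : q.IsWeightedHomogeneous w a)
    (h : (q * S).IsWeightedHomogeneous w n) :
    S.IsWeightedHomogeneous w (n - a) := by
  classical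
  set F := ((MvPolynomial.weightedHomogeneousComponent_finsupp (w := w) S :
    (Function.support fun c => weightedHomogeneousComponent w c S).Finite)).toFinset with hF
  have hS : S = ∑ c ∈ F, weightedHomogeneousComponent w c S := by
    rw [← finsum_eq_sum _ (MvPolynomial.weightedHomogeneousComponent_finsupp S)]
    exact (sum_weightedHomogeneousComponent w S).symm
  have key : ∀ c, a + c ≠ n → weightedHomogeneousComponent w c S = 0 := by
    intro c hc
    by_contra hne
    have hcF : c ∈ F := by
      rw [hF]
      exact (Set.Finite.mem_toFinset (hs := _)).2 hne
    have hqc : q * weightedHomogeneousComponent w c S ≠ 0 := mul_ne_zero hq hne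
    obtain ⟨d, hd⟩ := exists_coeff_ne_zero hqc
    have hwd : weight w d = a + c :=
      (hqa.mul (weightedHomogeneousComponent_isWeightedHomogeneous c S)) hd
    have hcoeff : coeff d (q * S) = coeff d (q * weightedHomogeneousComponent w c S) := by
      conv_lhs => rw [hS]
      rw [Finset.mul_sum, coeff_sum]
      rw [Finset.sum_eq_single c]
      · intro c' hc' hcc'
        by_contra h0
        have := (hqa.mul (weightedHomogeneousComponent_isWeightedHomogeneous c' S)) h0
        rw [hwd] at this
        exact hcc' (by omega)
      · intro hcF'
        exact absurd hcF hcF'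
    have : coeff d (q * S) ≠ 0 := by rw [hcoeff]; exact hd
    have := h this
    rw [hwd] at this
    exact hc this
  intro d hd
  set c := weight w d with hc
  have hcomp : coeff d (weightedHomogeneousComponent w c S) ≠ 0 := by
    rw [coeff_weightedHomogeneousComponent, if_pos rfl]
    exact hd
  have hcn : a + c = n := by
    by_contra hcn
    rw [key c hcn] at hcomp
    simp at hcomp
  omega

end Aux

section Multi

variable {k : ℕ} {m : Fin k → ℕ}

/-- indicator weight of group `l` -/
private def wt (l : Fin k) (v : Σ l : Fin k, Fin (m l + 1)) : ℕ := if v.1 = l then 1 else 0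

private theorem wt_weight (l : Fin k) (s : (Σ l : Fin k, Fin (m l + 1)) →₀ ℕ) :
    weight (wt l) s = ∑ i : Fin (m l + 1), s ⟨l, i⟩ := by
  classical
  rw [weight_apply]
  rw [Finsupp.sum_fintype _ _ (by intro v; simp)]
  rw [← Finset.univ_sigma_univ, Finset.sum_sigma]
  rw [Finset.sum_eq_single l]
  · simp [wt]
  · intro l' _ hl'
    simp [wt, hl']
  · intro h
    simp at h

/-- the quadric of group `l` -/
private noncomputable def qp (l : Fin k) : MvPolynomial (Σ l : Fin k, Fin (m l + 1)) ℂ :=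
  ∑ i : Fin (m l + 1), X (⟨l, i⟩ : Σ l : Fin k, Fin (m l + 1)) ^ 2

private theorem pderiv_qp (l : Fin k) (v : Σ l : Fin k, Fin (m l + 1)) :
    pderiv v (qp l : MvPolynomial (Σ l : Fin k, Fin (m l + 1)) ℂ)
      = if v.1 = l then 2 * X v else 0 := by
  classical
  rw [qp, map_sum]
  have h1 : ∀ i : Fin (m l + 1),
      pderiv v ((X (⟨l, i⟩ : Σ l : Fin k, Fin (m l + 1)) : MvPolynomial _ ℂ) ^ 2)
        = if (⟨l, i⟩ : Σ l : Fin k, Fin (m l + 1)) = v then 2 * X v else 0 := by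
    intro i
    rw [pderiv_pow]
    rcases eq_or_ne (⟨l, i⟩ : Σ l : Fin k, Fin (m l + 1)) v with h | h
    · rw [if_pos h, h, pderiv_X_self]
      push_cast
      ring
    · rw [if_neg h, pderiv_X_of_ne h]
      simp
  simp_rw [h1]
  obtain ⟨vl, vi⟩ := v
  rcases eq_or_ne vl l with rfl | hvl
  · rw [if_pos rfl, Finset.sum_eq_single vi]
    · simp
    · intro i _ hi
      rw [if_neg]
      simp only [Sigma.ext_iff, heq_eq_eq, true_and]
      exact hi
    · simp
  · rw [if_neg hvl, Finset.sum_eq_zero]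
    intro i _
    rw [if_neg]
    simp only [Sigma.ext_iff]
    rintro ⟨h, -⟩
    exact hvl h.symm

private theorem qp_ne_zero (l : Fin k) :
    (qp l : MvPolynomial (Σ l : Fin k, Fin (m l + 1)) ℂ) ≠ 0 := by
  classical
  intro h
  have := congrArg (eval (fun v : Σ l : Fin k, Fin (m l + 1) =>
    if v = ⟨l, (0 : Fin (m l + 1))⟩ then (1 : ℂ) else 0)) h
  rw [qp, map_sum, map_zero] at this
  rw [Finset.sum_eq_single (0 : Fin (m l + 1))] at this
  · simp at this
  · intro i _ hi
    rw [eval_pow, eval_X, if_neg, zero_pow]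
    · norm_num
    · simp only [Sigma.ext_iff, heq_eq_eq, true_and]
      exact hi
  · simp

private theorem qp_iwh (l l' : Fin k) :
    (qp l' : MvPolynomial (Σ l : Fin k, Fin (m l + 1)) ℂ).IsWeightedHomogeneous (wt l)
      (if l' = l then 2 else 0) := by
  classical
  rw [qp]
  apply MvPolynomial.IsWeightedHomogeneous.sum
  intro i _
  have hX : (X (⟨l', i⟩ : Σ l : Fin k, Fin (m l + 1)) : MvPolynomial _ ℂ).IsWeightedHomogeneous
      (wt l) (wt l ⟨l', i⟩) := isWeightedHomogeneous_X ℂ _ _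
  have h2 := hX.mul hX
  have hwt : (wt l (⟨l', i⟩ : Σ l : Fin k, Fin (m l + 1))) + (wt l ⟨l', i⟩)
      = (if l' = l then 2 else 0) := by
    rw [wt]
    split_ifs <;> simp
  rw [hwt] at h2
  rwa [sq]

private theorem aux_euler (l : Fin k) (n : ℕ)
    (T : MvPolynomial (Σ l : Fin k, Fin (m l + 1)) ℂ)
    (hT : ∀ s ∈ T.support, (∑ i : Fin (m l + 1), s ⟨l, i⟩) = n) :
    ∑ i : Fin (m l + 1), X (⟨l, i⟩ : Σ l : Fin k, Fin (m l + 1)) * pderiv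
      (⟨l, i⟩ : Σ l : Fin k, Fin (m l + 1)) T = C (n : ℂ) * T := by
  classical
  nth_rewrite 1 2 [T.as_sum]
  simp_rw [map_sum, Finset.mul_sum]
  rw [Finset.sum_comm]
  apply Finset.sum_congr rfl
  intro s hs
  simp_rw [aux_X_mul_pderiv_monomial]
  rw [← map_sum (monomial s)]
  rw [C_mul_monomial]
  congr 1
  rw [← Finset.mul_sum, ← Nat.cast_sum, hT s hs]
  ring

/-- closure of the minor identities under multiplication -/
private def Good (T : MvPolynomial (Σ l : Fin k, Fin (m l + 1)) ℂ) : Prop :=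
  ∀ (l : Fin k) (i j : Fin (m l + 1)),
    X (⟨l, j⟩ : Σ l : Fin k, Fin (m l + 1)) * pderiv (⟨l, i⟩ : Σ l : Fin k, Fin (m l + 1)) T =
      X (⟨l, i⟩ : Σ l : Fin k, Fin (m l + 1)) * pderiv (⟨l, j⟩ : Σ l : Fin k, Fin (m l + 1)) T

private theorem good_mul {A B : MvPolynomial (Σ l : Fin k, Fin (m l + 1)) ℂ}
    (hA : Good A) (hB : Good B) : Good (A * B) := by
  intro l i j
  rw [pderiv_mul, pderiv_mul]
  linear_combination B * hA l i j + A * hB l i j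

private theorem good_C (c : ℂ) : Good (C c : MvPolynomial (Σ l : Fin k, Fin (m l + 1)) ℂ) := by
  intro l i j
  rw [pderiv_C, pderiv_C]
  ring

private theorem good_one : Good (1 : MvPolynomial (Σ l : Fin k, Fin (m l + 1)) ℂ) := by
  intro l i j
  simp [pderiv_one]

private theorem good_qp (l' : Fin k) :
    Good (qp l' : MvPolynomial (Σ l : Fin k, Fin (m l + 1)) ℂ) := by
  intro l i j
  rw [pderiv_qp, pderiv_qp]
  by_cases h : l = l'
  · simp only [h, if_pos rfl, if_true]
    ring
  · simp only [if_neg h]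
    ring

private theorem good_pow {A : MvPolynomial (Σ l : Fin k, Fin (m l + 1)) ℂ}
    (hA : Good A) (n : ℕ) : Good (A ^ n) := by
  induction n with
  | zero => simpa using good_one
  | succ n ih => rw [pow_succ]; exact good_mul ih hA

private theorem good_prod {s : Finset (Fin k)}
    {f : Fin k → MvPolynomial (Σ l : Fin k, Fin (m l + 1)) ℂ}
    (hf : ∀ l ∈ s, Good (f l)) : Good (∏ l ∈ s, f l) := by
  classical
  induction s using Finset.induction with
  | empty => simpa using good_one
  | insert _ _ hx ih =>
    rw [Finset.prod_insert hx]
    exact good_mul (hf _ (Finset.mem_insert_self _ _))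
      (ih fun l hl => hf l (Finset.mem_insert_of_mem hl))

/-- Main induction -/
private theorem key (hm : ∀ l, 1 ≤ m l) : ∀ (N : ℕ) (e : Fin k → ℕ), (∑ l, e l) = N →
    ∀ T : MvPolynomial (Σ l : Fin k, Fin (m l + 1)) ℂ,
    (∀ s ∈ T.support, ∀ l : Fin k, (∑ i : Fin (m l + 1), s ⟨l, i⟩) = 2 * e l) →
    Good T → ∃ c : ℂ, T = C c * ∏ l : Fin k, (qp l) ^ e l := by
  classical
  intro N
  induction N with
  | zero =>
    intro e he T hT _
    have he0 : ∀ l, e l = 0 := by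
      intro l
      have := Finset.sum_eq_zero_iff.mp he l (Finset.mem_univ l)
      exact this
    refine ⟨coeff 0 T, ?_⟩
    have hprod : ∏ l : Fin k, (qp l : MvPolynomial (Σ l : Fin k, Fin (m l + 1)) ℂ) ^ e l = 1 := by
      apply Finset.prod_eq_one
      intro l _
      rw [he0 l, pow_zero]
    rw [hprod, mul_one]
    ext d
    rcases eq_or_ne d 0 with rfl | hd
    · simp
    · rw [coeff_C, if_neg (Ne.symm hd)]
      by_contra h0
      have hds : d ∈ T.support := MvPolynomial.mem_support_iff.mpr h0
      obtain ⟨v, hv⟩ : ∃ v, d v ≠ 0 := by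
        by_contra hall
        push_neg at hall
        exact hd (Finsupp.ext hall)
      obtain ⟨l, i⟩ := v
      have hsum := hT d hds l
      rw [he0 l, mul_zero] at hsum
      have : d ⟨l, i⟩ = 0 := by
        have := Finset.sum_eq_zero_iff.mp hsum i (Finset.mem_univ i)
        exact this
      exact hv this
  | succ N ih =>
    intro e he T hT hG
    obtain ⟨l₀, hl₀⟩ : ∃ l, e l ≠ 0 := by
      by_contra hall
      push_neg at hall
      rw [Finset.sum_eq_zero (fun l _ => hall l)] at he
      omega
    -- two distinct indices in group l₀
    have hm0 : 1 ≤ m l₀ := hm l₀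
    have h01 : (0 : Fin (m l₀ + 1)) ≠ 1 := by
      intro h
      have h2 := congrArg Fin.val h
      rw [Fin.val_zero, Fin.val_one', Nat.mod_eq_of_lt (by omega)] at h2
      omega
    -- divisibility
    have hdvd : ∀ i : Fin (m l₀ + 1),
        X (⟨l₀, i⟩ : Σ l : Fin k, Fin (m l + 1)) ∣
          pderiv (⟨l₀, i⟩ : Σ l : Fin k, Fin (m l + 1)) T := by
      intro i
      set j : Fin (m l₀ + 1) := if i = 0 then 1 else 0 with hj
      have hji : j ≠ i := by
        rw [hj]
        split_ifs with h
        · rw [h]; exact (h01).symm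
        · exact Ne.symm h
      have h := hG l₀ i j
      apply aux_X_dvd
      intro d hd
      have hdc : coeff d (pderiv (⟨l₀, i⟩ : Σ l : Fin k, Fin (m l + 1)) T) ≠ 0 :=
        MvPolynomial.mem_support_iff.mp hd
      by_contra hdi
      have h1 : coeff (Finsupp.single (⟨l₀, j⟩ : Σ l : Fin k, Fin (m l + 1)) 1 + d)
          (X (⟨l₀, j⟩ : Σ l : Fin k, Fin (m l + 1)) *
            pderiv (⟨l₀, i⟩ : Σ l : Fin k, Fin (m l + 1)) T) ≠ 0 := by
        rw [coeff_X_mul]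
        exact hdc
      rw [h, coeff_X_mul'] at h1
      apply h1
      have hne2 : (⟨l₀, j⟩ : Σ l : Fin k, Fin (m l + 1)) ≠ ⟨l₀, i⟩ := by
        simp only [ne_eq, Sigma.ext_iff, heq_eq_eq, eq_self_iff_true, true_and]
        exact hji
      rw [if_neg]
      rw [Finsupp.mem_support_iff]
      push_neg
      rw [Finsupp.add_apply, Finsupp.single_apply, if_neg hne2, hdi]
      simp
    choose S hS using hdvd
    -- all the S's coincide
    have hSeq : ∀ i : Fin (m l₀ + 1), S i = S 0 := by
      intro i
      rcases eq_or_ne i 0 with rfl | hi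
      · rfl
      · have h := hG l₀ i 0
        rw [hS i, hS 0] at h
        have h2 : (X (⟨l₀, (0 : Fin (m l₀ + 1))⟩ : Σ l : Fin k, Fin (m l + 1)) *
            X (⟨l₀, i⟩ : Σ l : Fin k, Fin (m l + 1))) * S i =
            (X (⟨l₀, (0 : Fin (m l₀ + 1))⟩ : Σ l : Fin k, Fin (m l + 1)) *
            X (⟨l₀, i⟩ : Σ l : Fin k, Fin (m l + 1))) * S 0 := by
          linear_combination h
        exact mul_left_cancel₀ (mul_ne_zero (X_ne_zero _) (X_ne_zero _)) h2
    -- Euler identity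
    have heuler := aux_euler l₀ (2 * e l₀) T (fun s hs => hT s hs l₀)
    have hqs : (qp l₀ : MvPolynomial (Σ l : Fin k, Fin (m l + 1)) ℂ) * S 0
        = C ((2 * e l₀ : ℕ) : ℂ) * T := by
      rw [← heuler, qp, Finset.sum_mul]
      apply Finset.sum_congr rfl
      intro i _
      rw [hS i, hSeq i]
      ring
    have hne : ((2 * e l₀ : ℕ) : ℂ) ≠ 0 := by
      rw [Nat.cast_ne_zero]
      omega
    obtain ⟨S', hS'⟩ : ∃ S' : MvPolynomial (Σ l : Fin k, Fin (m l + 1)) ℂ,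
        S' = C (((2 * e l₀ : ℕ) : ℂ)⁻¹) * S 0 := ⟨_, rfl⟩
    have hTq : T = qp l₀ * S' := by
      have hCC : (C (((2 * e l₀ : ℕ) : ℂ)⁻¹) : MvPolynomial (Σ l : Fin k, Fin (m l + 1)) ℂ) *
          C ((2 * e l₀ : ℕ) : ℂ) = 1 := by
        rw [← C_mul, inv_mul_cancel₀ hne, C_1]
      rw [hS']
      linear_combination (-(C (((2 * e l₀ : ℕ) : ℂ)⁻¹) : MvPolynomial (Σ l : Fin k, Fin (m l + 1)) ℂ)) * hqs - T * hCC
    -- homogeneity of S'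
    set e' : Fin k → ℕ := Function.update e l₀ (e l₀ - 1) with he'
    have hS'hom : ∀ s ∈ S'.support, ∀ l : Fin k,
        (∑ i : Fin (m l + 1), s ⟨l, i⟩) = 2 * e' l := by
      intro s hs l
      have hTiwh : T.IsWeightedHomogeneous (wt l) (2 * e l) := by
        intro d hd
        rw [wt_weight]
        exact hT d (MvPolynomial.mem_support_iff.mpr hd) l
      have hmul : ((qp l₀ : MvPolynomial (Σ l : Fin k, Fin (m l + 1)) ℂ) * S').IsWeightedHomogeneous
          (wt l) (2 * e l) := by rwa [← hTq]
      have hdiv := aux_iwh_div (qp_ne_zero l₀) (qp_iwh l l₀) hmul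
      have := hdiv (MvPolynomial.mem_support_iff.mp hs)
      rw [wt_weight] at this
      rw [this, he']
      rcases eq_or_ne l₀ l with rfl | hll
      · rw [if_pos rfl, Function.update_self]
        omega
      · rw [if_neg hll, Function.update_of_ne (Ne.symm hll)]
        omega
    -- minors for S'
    have hS'good : Good S' := by
      intro l i j
      have h := hG l i j
      rw [hTq, pderiv_mul, pderiv_mul, pderiv_qp, pderiv_qp] at h
      have h2 : (qp l₀ : MvPolynomial (Σ l : Fin k, Fin (m l + 1)) ℂ) *
          (X (⟨l, j⟩ : Σ l : Fin k, Fin (m l + 1)) *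
            pderiv (⟨l, i⟩ : Σ l : Fin k, Fin (m l + 1)) S') =
          (qp l₀ : MvPolynomial (Σ l : Fin k, Fin (m l + 1)) ℂ) *
          (X (⟨l, i⟩ : Σ l : Fin k, Fin (m l + 1)) *
            pderiv (⟨l, j⟩ : Σ l : Fin k, Fin (m l + 1)) S') := by
        dsimp only at h
        by_cases hll : l = l₀
        · rw [if_pos hll, if_pos hll] at h
          linear_combination h
        · rw [if_neg hll, if_neg hll] at h
          linear_combination h
      exact mul_left_cancel₀ (qp_ne_zero l₀) h2
    -- apply the induction hypothesis
    have hsum' : (∑ l, e' l) = N := by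
      rw [he', Finset.sum_update_of_mem (Finset.mem_univ l₀), ← Finset.erase_eq]
      rw [← Finset.sum_erase_add _ _ (Finset.mem_univ l₀)] at he
      omega
    obtain ⟨c, hc⟩ := ih e' hsum' S' hS'hom hS'good
    refine ⟨c, ?_⟩
    rw [hTq, hc]
    rw [← Finset.mul_prod_erase Finset.univ _ (Finset.mem_univ l₀),
      ← Finset.mul_prod_erase Finset.univ _ (Finset.mem_univ l₀)]
    have herase : ∏ l ∈ Finset.univ.erase l₀,
        (qp l : MvPolynomial (Σ l : Fin k, Fin (m l + 1)) ℂ) ^ e' l =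
        ∏ l ∈ Finset.univ.erase l₀, (qp l) ^ e l := by
      apply Finset.prod_congr rfl
      intro l hl
      rw [he', Function.update_of_ne (Finset.ne_of_mem_erase hl)]
    rw [herase, he', Function.update_self]
    have hpow : (qp l₀ : MvPolynomial (Σ l : Fin k, Fin (m l + 1)) ℂ) *
        (qp l₀) ^ (e l₀ - 1) = (qp l₀) ^ e l₀ := by
      rw [← pow_succ']
      congr 1
      omega
    ring_nf
    rw [← hpow]

end Multi

theorem multi_eigenminor_kernel_all_even (k : ℕ) (hk : 1 ≤ k)
    (m e : Fin k → ℕ) (hm : ∀ l, 1 ≤ m l) (he : ∀ l, 1 ≤ e l)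
    (T : MvPolynomial (Σ l : Fin k, Fin (m l + 1)) ℂ)
    (hT : ∀ s ∈ T.support, ∀ l : Fin k, (∑ i : Fin (m l + 1), s ⟨l, i⟩) = 2 * e l) :
    (∀ (l : Fin k) (i j : Fin (m l + 1)),
        X (⟨l, j⟩ : Σ l : Fin k, Fin (m l + 1)) *
            pderiv (⟨l, i⟩ : Σ l : Fin k, Fin (m l + 1)) T =
          X (⟨l, i⟩ : Σ l : Fin k, Fin (m l + 1)) *
            pderiv (⟨l, j⟩ : Σ l : Fin k, Fin (m l + 1)) T) ↔
      ∃ c : ℂ, T = C c * ∏ l : Fin k,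
        (∑ i : Fin (m l + 1), X (⟨l, i⟩ : Σ l : Fin k, Fin (m l + 1)) ^ 2) ^ e l := by
  constructor
  · intro hG
    obtain ⟨c, hc⟩ := key hm (∑ l, e l) e rfl T hT hG
    exact ⟨c, by rw [hc]; rfl⟩
  · rintro ⟨c, rfl⟩
    intro l i j
    have hgood : Good (C c * ∏ l : Fin k, (qp l : MvPolynomial (Σ l : Fin k, Fin (m l + 1)) ℂ) ^ e l) :=
      good_mul (good_C c) (good_prod fun l _ => good_pow (good_qp l) (e l))
    exact hgood l i j
end

section
/- Let m ≥ 1 and let d = 2e be an even positive integer. For every homogeneous polynomial f ∈ ℂ[x_0,…,x_m] of degree d and every c ∈ ℂ, the polynomials f and f + c·q^e have identical eigen-minors: M_{ij}(f + c·q^e) = M_{ij}(f) as polynomials for all 0 ≤ i, j ≤ m. In particular f and f + c·q^{d/2} have the same eigenscheme, which gives the containment {f + c·q^{d/2} : c ∈ ℂ} ⊆ τ^{-1}(τ(f)) in the even-degree case of Theorem A. -/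
open MvPolynomial

lemma pderiv_q {m : ℕ} (i : Fin (m+1)) :
    pderiv i (∑ r : Fin (m+1), (X r : MvPolynomial (Fin (m+1)) ℂ) ^ 2) = 2 * X i := by
  rw [map_sum, Finset.sum_eq_single i]
  · simp [pderiv_X, pow_two]; ring
  · intro b _ hb
    simp [pow_two, pderiv_X, Pi.single_eq_of_ne (hb)]
  · simp

theorem eigenminors_invariant_add_q_pow (m e : ℕ) (hm : 1 ≤ m) (he : 1 ≤ e)
    (f : MvPolynomial (Fin (m + 1)) ℂ) (hf : f.IsHomogeneous (2 * e)) (c : ℂ) :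
    ∀ i j : Fin (m + 1),
      X j * pderiv i (f + C c * (∑ r : Fin (m + 1), X r ^ 2) ^ e)
          - X i * pderiv j (f + C c * (∑ r : Fin (m + 1), X r ^ 2) ^ e) =
        X j * pderiv i f - X i * pderiv j f := by
  intro i j
  set q : MvPolynomial (Fin (m+1)) ℂ := ∑ r : Fin (m+1), X r ^ 2 with hq
  have hp : ∀ k : Fin (m+1), pderiv k (q ^ e) = (e : MvPolynomial (Fin (m+1)) ℂ) * q ^ (e - 1) * (2 * X k) := by
    intro k
    rw [Derivation.leibniz_pow, pderiv_q]
    simp [smul_eq_mul]; ring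
  simp only [map_add, Derivation.leibniz, pderiv_C, hp, smul_eq_mul, smul_zero, mul_zero]
  ring
end

section
/- Let k ≥ 1, let m_1,…,m_k ≥ 1, and suppose every d_l = 2e_l is even and positive. For every multihomogeneous polynomial T of multidegree (d_1,…,d_k) and every c ∈ ℂ, the polynomials T and T + c·q_1^{e_1}⋯q_k^{e_k} have identical eigen-minors: M^l_{ij}(T + c·q_1^{e_1}⋯q_k^{e_k}) = M^l_{ij}(T) as polynomials for every group l and all indices i, j. In particular T and T + c·q_1^{d_1/2}⊗⋯⊗q_k^{d_k/2} have the same singular-tuple locus, giving the containment {T + c·q_1^{d_1/2}⊗⋯⊗q_k^{d_k/2} : c ∈ ℂ} ⊆ τ^{-1}(τ(T)) in the all-even case of the main theorem. -/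
open MvPolynomial

theorem multi_eigenminors_invariant_add_q_pow (k : ℕ) (hk : 1 ≤ k)
    (m e : Fin k → ℕ) (hm : ∀ l, 1 ≤ m l) (he : ∀ l, 1 ≤ e l)
    (T : MvPolynomial (Σ l : Fin k, Fin (m l + 1)) ℂ)
    (hT : ∀ s ∈ T.support, ∀ l : Fin k, (∑ i : Fin (m l + 1), s ⟨l, i⟩) = 2 * e l)
    (c : ℂ) :
    ∀ (l : Fin k) (i j : Fin (m l + 1)),
      X (⟨l, j⟩ : Σ l : Fin k, Fin (m l + 1)) *
          pderiv (⟨l, i⟩ : Σ l : Fin k, Fin (m l + 1))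
            (T + C c * ∏ t : Fin k,
              (∑ r : Fin (m t + 1), X (⟨t, r⟩ : Σ l : Fin k, Fin (m l + 1)) ^ 2) ^ e t)
        - X (⟨l, i⟩ : Σ l : Fin k, Fin (m l + 1)) *
          pderiv (⟨l, j⟩ : Σ l : Fin k, Fin (m l + 1))
            (T + C c * ∏ t : Fin k,
              (∑ r : Fin (m t + 1), X (⟨t, r⟩ : Σ l : Fin k, Fin (m l + 1)) ^ 2) ^ e t) =
      X (⟨l, j⟩ : Σ l : Fin k, Fin (m l + 1)) *
          pderiv (⟨l, i⟩ : Σ l : Fin k, Fin (m l + 1)) T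
        - X (⟨l, i⟩ : Σ l : Fin k, Fin (m l + 1)) *
          pderiv (⟨l, j⟩ : Σ l : Fin k, Fin (m l + 1)) T := by
  intro l i j
  set σ := (Σ l : Fin k, Fin (m l + 1))
  set Q : Fin k → MvPolynomial σ ℂ :=
    fun t => (∑ r : Fin (m t + 1), X (⟨t, r⟩ : σ) ^ 2) ^ e t with hQ
  set S : MvPolynomial σ ℂ := ∑ r : Fin (m l + 1), X (⟨l, r⟩ : σ) ^ 2 with hS
  have hzero : ∀ (a : Fin (m l + 1)) (t : Fin k), t ≠ l →
      pderiv (⟨l, a⟩ : σ) (Q t) = 0 := by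
    intro a t ht
    simp only [hQ]
    have h0 : pderiv (⟨l, a⟩ : σ)
        ((∑ r : Fin (m t + 1), X (⟨t, r⟩ : σ) ^ 2 : MvPolynomial σ ℂ)) = 0 := by
      rw [map_sum]
      refine Finset.sum_eq_zero fun r _ => ?_
      rw [Derivation.leibniz_pow, pderiv_X_of_ne]
      · simp
      · intro h
        exact ht (congrArg Sigma.fst h)
    rw [Derivation.leibniz_pow, h0]
    simp
  have hS' : ∀ (a : Fin (m l + 1)),
      pderiv (⟨l, a⟩ : σ) S = 2 * X (⟨l, a⟩ : σ) := by
    intro a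
    rw [hS, map_sum]
    rw [Finset.sum_eq_single a]
    · rw [Derivation.leibniz_pow, pderiv_X_self]
      simp [two_smul, two_mul]
    · intro b _ hb
      rw [Derivation.leibniz_pow, pderiv_X_of_ne]
      · simp
      · intro h
        exact hb (by simpa using h)
    · simp
  have hprod : ∀ (a : Fin (m l + 1)),
      pderiv (⟨l, a⟩ : σ) (∏ t : Fin k, Q t)
        = ((e l : MvPolynomial σ ℂ) * (S ^ (e l - 1) * (2 * X (⟨l, a⟩ : σ))))
            * ∏ t ∈ Finset.univ.erase l, Q t := by
    intro a
    rw [← Finset.mul_prod_erase Finset.univ Q (Finset.mem_univ l), Derivation.leibniz]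
    have h2 : pderiv (⟨l, a⟩ : σ) (∏ t ∈ Finset.univ.erase l, Q t) = 0 := by
      refine Finset.prod_induction Q (fun p => pderiv (⟨l, a⟩ : σ) p = 0)
        ?_ (by simp) (fun t ht => hzero a t (Finset.ne_of_mem_erase ht))
      intro x y hx hy
      show pderiv (⟨l, a⟩ : σ) (x * y) = 0
      rw [Derivation.leibniz, hx, hy]; simp
    have h3 : pderiv (⟨l, a⟩ : σ) (Q l)
        = (e l : MvPolynomial σ ℂ) * (S ^ (e l - 1) * (2 * X (⟨l, a⟩ : σ))) := by
      rw [hQ]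
      simp only [← hS]
      rw [Derivation.leibniz_pow, hS' a]
      simp [nsmul_eq_mul, smul_eq_mul, mul_assoc]
    rw [h2, h3]
    simp only [smul_eq_mul, smul_zero, hQ, mul_zero, zero_add]
    ring
  simp only [map_add, pderiv_C_mul, hprod]
  ring
end

section
/- (Arithmetic form of Lemma 4.5.) Let k ≥ 2, and let d_1,…,d_k ≥ 1 and m_1,…,m_k ≥ 1 be integers such that m_l ≤ Σ_{i≠l} m_i for every l with d_l = 1, and such that if k = 2 then (d_1,d_2) ≠ (1,1). Let r ≥ 2 be an integer, let j ∈ {1,…,k}, and let r_1,…,r_k and q_1,…,q_k be nonnegative integers with Σ_{l=1}^k r_l = r, Σ_{l=1}^k q_l ≤ r − 1, and r_l ≤ m_l for all l. For l ≠ j set t_l := 2r_l − d_l(r−1) ∈ ℤ, and set t_j := r_j − d_j(r−1) − 2 ∈ ℤ. Then it is impossible that both of the following hold simultaneously: (a) for every l ≠ j, at least one of: (q_l = 0 and t_l > r_l), (q_l = r_l and t_l = 0), (q_l = m_l and t_l < r_l − m_l); and (b) at least one of: (q_j = 0 and t_j ≥ 0), (q_j = r_j − 1 and t_j = −r_j and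 1 ≤ r_j ≤ m_j), (q_j = r_j and t_j = −r_j − 1 and r_j ≤ m_j − 1), (q_j = m_j − 1 and t_j = −m_j − 1 and r_j ≤ m_j − 1), (q_j = m_j and t_j ≤ −m_j − 2). -/
theorem bott_nonvanishing_incompatible (k : ℕ) (hk : 2 ≤ k)
    (d m : Fin k → ℕ) (hd : ∀ l, 1 ≤ d l) (hm : ∀ l, 1 ≤ m l)
    (htri : ∀ l, d l = 1 → m l ≤ ∑ i ∈ Finset.univ.erase l, m i)
    (hk2 : k = 2 → ¬ (∀ l, d l = 1))
    (r : ℕ) (hr : 2 ≤ r) (j : Fin k)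
    (rr q : Fin k → ℕ) (hrr : ∑ l, rr l = r) (hq : ∑ l, q l ≤ r - 1)
    (hrm : ∀ l, rr l ≤ m l) :
    ¬ ((∀ l : Fin k, l ≠ j →
          (q l = 0 ∧ (rr l : ℤ) < 2 * rr l - d l * (r - 1)) ∨
          (q l = rr l ∧ 2 * (rr l : ℤ) - d l * (r - 1) = 0) ∨
          (q l = m l ∧ 2 * (rr l : ℤ) - d l * (r - 1) < (rr l : ℤ) - m l)) ∧
        ((q j = 0 ∧ 0 ≤ (rr j : ℤ) - d j * (r - 1) - 2) ∨
         ((q j : ℤ) = (rr j : ℤ) - 1 ∧ (rr j : ℤ) - d j * (r - 1) - 2 = -(rr j : ℤ) ∧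
            1 ≤ rr j ∧ rr j ≤ m j) ∨
         (q j = rr j ∧ (rr j : ℤ) - d j * (r - 1) - 2 = -(rr j : ℤ) - 1 ∧
            (rr j : ℤ) ≤ (m j : ℤ) - 1) ∨
         ((q j : ℤ) = (m j : ℤ) - 1 ∧ (rr j : ℤ) - d j * (r - 1) - 2 = -(m j : ℤ) - 1 ∧
            (rr j : ℤ) ≤ (m j : ℤ) - 1) ∨
         (q j = m j ∧ (rr j : ℤ) - d j * (r - 1) - 2 ≤ -(m j : ℤ) - 2))) := by
  rintro ⟨ha, hb⟩
  obtain ⟨e, he_def⟩ : ∃ e : Fin k → ℕ, ∀ l, e l = d l * (r - 1) :=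
    ⟨fun l => d l * (r - 1), fun _ => rfl⟩
  have he : ∀ l, ((e l : ℤ)) = (d l : ℤ) * ((r : ℤ) - 1) := by
    intro l
    rw [he_def l]
    push_cast [Nat.cast_sub (by omega : 1 ≤ r)]
    ring
  simp only [← he] at ha hb
  have her : ∀ l, r - 1 ≤ e l := by
    intro l
    rw [he_def l]
    calc r - 1 = 1 * (r - 1) := (one_mul _).symm
    _ ≤ d l * (r - 1) := Nat.mul_le_mul_right _ (hd l)
  have hed : ∀ l, 2 ≤ d l → 2 * (r - 1) ≤ e l := by
    intro l h
    rw [he_def l]; exact Nat.mul_le_mul_right _ h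
  have hd1 : ∀ l, e l ≤ r - 1 → d l = 1 := by
    intro l h
    rcases Nat.lt_or_ge (d l) 2 with h2 | h2
    · have := hd l; omega
    · have := hed l h2; omega
  have hrle : ∀ l, rr l ≤ r := by
    intro l
    rw [← hrr]
    exact Finset.single_le_sum (fun i _ => Nat.zero_le _) (Finset.mem_univ l)
  have hsum_erase : ∀ (f : Fin k → ℕ) (a : Fin k),
      ∑ i ∈ Finset.univ.erase a, f i + f a = ∑ i, f i :=
    fun f a => Finset.sum_erase_add _ _ (Finset.mem_univ a)
  by_cases hex : ∃ l, l ≠ j ∧ e l < rr l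
  · -- Case I : some l0 ≠ j with Bott case A1
    obtain ⟨l0, hl0j, hl0⟩ := hex
    have hr0 : rr l0 = r := by have := hrle l0; have := her l0; omega
    have hd0 : d l0 = 1 := hd1 l0 (by omega)
    have hzero : ∀ i, i ≠ l0 → rr i = 0 := by
      intro i hi
      have h1 := hsum_erase rr l0
      rw [hrr, hr0] at h1
      have h2 : ∑ i ∈ Finset.univ.erase l0, rr i = 0 := by omega
      exact (Finset.sum_eq_zero_iff.mp h2) i
        (Finset.mem_erase.mpr ⟨hi, Finset.mem_univ i⟩)
    have hrj0 : rr j = 0 := hzero j (Ne.symm hl0j)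
    have hqm : ∀ i, i ≠ l0 → i ≠ j → q i = m i := by
      intro i hil0 hij
      rcases ha i hij with ⟨h1, h2⟩ | ⟨h1, h2⟩ | ⟨h1, h2⟩
      · exfalso; have := her i; have := hzero i hil0; omega
      · exfalso; have := her i; have := hzero i hil0; omega
      · exact h1
    have htrij := htri l0 hd0
    have hml0 : r ≤ m l0 := hr0 ▸ hrm l0
    have hjmem : j ∈ Finset.univ.erase l0 :=
      Finset.mem_erase.mpr ⟨Ne.symm hl0j, Finset.mem_univ j⟩
    have hqer := hsum_erase q l0
    rcases hb with ⟨h1, h2⟩ | ⟨h1, h2, h3, h4⟩ | ⟨h1, h2, h3⟩ | ⟨h1, h2, h3⟩ | ⟨h1, h2⟩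
    · -- B1
      have := her j; omega
    · -- B2
      omega
    · -- B3
      have := her j; omega
    · -- B4
      have hqj : q j + 1 = m j := by have := hm j; omega
      have hej : e j + 1 = m j := by omega
      have hq_split := Finset.sum_erase_add (Finset.univ.erase l0) q hjmem
      have hm_split := Finset.sum_erase_add (Finset.univ.erase l0) m hjmem
      have heq2 : ∑ i ∈ (Finset.univ.erase l0).erase j, q i
          = ∑ i ∈ (Finset.univ.erase l0).erase j, m i := by
        refine Finset.sum_congr rfl fun i hi => ?_
        obtain ⟨hij, hi2⟩ := Finset.mem_erase.mp hi
        exact hqm i (Finset.mem_erase.mp hi2).1 hij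
      have hcard : ((Finset.univ.erase l0).erase j).card = k - 2 := by
        rw [Finset.card_erase_of_mem hjmem,
          Finset.card_erase_of_mem (Finset.mem_univ l0), Finset.card_univ,
          Fintype.card_fin]
        omega
      have hge : k - 2 ≤ ∑ i ∈ (Finset.univ.erase l0).erase j, m i := by
        have := Finset.card_nsmul_le_sum ((Finset.univ.erase l0).erase j) m 1
          (fun i _ => hm i)
        simpa [hcard] using this
      have hk2' : k = 2 := by have := her j; omega
      have hdj : d j = 1 := hd1 j (by have := her j; omega)
      refine hk2 hk2' fun l => ?_
      have hval : l.val = j.val ∨ l.val = l0.val := by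
        have h5 : j.val ≠ l0.val := fun h => (Ne.symm hl0j) (Fin.ext h)
        have := l.isLt; have := j.isLt; have := l0.isLt
        omega
      rcases hval with h | h
      · rw [Fin.ext h]; exact hdj
      · rw [Fin.ext h]; exact hd0
    · -- B5
      have hle : ∑ i ∈ Finset.univ.erase l0, m i ≤ ∑ i ∈ Finset.univ.erase l0, q i := by
        refine Finset.sum_le_sum fun i hi => ?_
        rcases eq_or_ne i j with rfl | hij
        · omega
        · rw [hqm i (Finset.mem_erase.mp hi).1 hij]
      omega
  · -- Case II : no A1
    push_neg at hex
    have hA : ∀ l, l ≠ j → (q l = rr l ∧ 2 * rr l = e l) ∨ (q l = m l ∧ rr l + m l < e l) := by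
      intro l hl
      rcases ha l hl with ⟨h1, h2⟩ | ⟨h1, h2⟩ | ⟨h1, h2⟩
      · exfalso; have := hex l hl; omega
      · exact Or.inl ⟨h1, by omega⟩
      · exact Or.inr ⟨h1, by omega⟩
    have hqr : ∀ l ∈ Finset.univ.erase j, rr l ≤ q l := by
      intro l hl
      rcases hA l (Finset.mem_erase.mp hl).1 with ⟨h1, h2⟩ | ⟨h1, h2⟩
      · omega
      · have := hrm l; omega
    have hsq := hsum_erase q j
    have hsr := hsum_erase rr j
    have hler := Finset.sum_le_sum hqr
    rw [hrr] at hsr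
    rcases hb with ⟨h1, h2⟩ | ⟨h1, h2, h3, h4⟩ | ⟨h1, h2, h3⟩ | ⟨h1, h2, h3⟩ | ⟨h1, h2⟩
    · -- B1
      have := her j; have := hrle j; omega
    · -- B2 : the main case
      have hqj : q j + 1 = rr j := by omega
      have h2j : 2 * rr j = e j + 2 := by omega
      have heq : ∑ i ∈ Finset.univ.erase j, rr i = ∑ i ∈ Finset.univ.erase j, q i := by
        omega
      have hper : ∀ i ∈ Finset.univ.erase j, rr i = q i :=
        (Finset.sum_eq_sum_iff_of_le hqr).mp heq
      have hA2 : ∀ l, l ≠ j → 2 * rr l = e l ∨ (m l = rr l ∧ rr l + m l < e l) := by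
        intro l hl
        rcases hA l hl with ⟨h1', h2'⟩ | ⟨h1', h2'⟩
        · exact Or.inl h2'
        · right
          have hmem : l ∈ Finset.univ.erase j := Finset.mem_erase.mpr ⟨hl, Finset.mem_univ l⟩
          have := hper l hmem
          exact ⟨by omega, h2'⟩
      have hrpos : ∀ l ∈ Finset.univ.erase j, 1 ≤ rr l := by
        intro l hl
        rcases hA2 l (Finset.mem_erase.mp hl).1 with h | ⟨h1', h2'⟩
        · have := her l; omega
        · have := hm l; omega
      have hcard1 : (Finset.univ.erase j).card = k - 1 := by
        rw [Finset.card_erase_of_mem (Finset.mem_univ j), Finset.card_univ, Fintype.card_fin]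
      have hge1 : k - 1 ≤ ∑ i ∈ Finset.univ.erase j, rr i := by
        have := Finset.card_nsmul_le_sum (Finset.univ.erase j) rr 1 hrpos
        simpa [hcard1] using this
      have hdj : d j = 1 := by
        rcases (show d j = 1 ∨ 2 ≤ d j by have := hd j; omega) with h | h
        · exact h
        · exfalso; have := hed j h; omega
      have hej : e j = r - 1 := by rw [he_def j, hdj, one_mul]
      have hsum2 : 2 * ∑ i ∈ Finset.univ.erase j, rr i = r - 1 := by omega
      by_cases hex2 : ∃ l, l ≠ j ∧ 2 * rr l = e l
      · obtain ⟨l1, hl1j, hl1⟩ := hex2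
        have hmem1 : l1 ∈ Finset.univ.erase j :=
          Finset.mem_erase.mpr ⟨hl1j, Finset.mem_univ l1⟩
        have hsplit := Finset.sum_erase_add (Finset.univ.erase j) rr hmem1
        have hcard2 : ((Finset.univ.erase j).erase l1).card = k - 2 := by
          rw [Finset.card_erase_of_mem hmem1, hcard1]; omega
        have hge2 : k - 2 ≤ ∑ i ∈ (Finset.univ.erase j).erase l1, rr i := by
          have := Finset.card_nsmul_le_sum ((Finset.univ.erase j).erase l1) rr 1
            (fun i hi => hrpos i (Finset.mem_of_mem_erase hi))
          simpa [hcard2] using this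
        have hk2' : k = 2 := by have := her l1; omega
        have hdl1 : d l1 = 1 := hd1 l1 (by have := her l1; omega)
        refine hk2 hk2' fun l => ?_
        have hval : l.val = j.val ∨ l.val = l1.val := by
          have h5 : j.val ≠ l1.val := fun h => hl1j (Fin.ext h.symm)
          have := l.isLt; have := j.isLt; have := l1.isLt
          omega
        rcases hval with h | h
        · rw [Fin.ext h]; exact hdj
        · rw [Fin.ext h]; exact hdl1
      · push_neg at hex2
        have hms : ∑ i ∈ Finset.univ.erase j, m i = ∑ i ∈ Finset.univ.erase j, rr i := by
          refine Finset.sum_congr rfl fun i hi => ?_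
          have hij := (Finset.mem_erase.mp hi).1
          exact ((hA2 i hij).resolve_left (hex2 i hij)).1
        have htr := htri j hdj
        have := hrm j
        omega
    · -- B3
      have hall : ∀ l ∈ Finset.univ, rr l ≤ q l := by
        intro l _
        rcases eq_or_ne l j with rfl | hl
        · omega
        · exact hqr l (Finset.mem_erase.mpr ⟨hl, Finset.mem_univ l⟩)
      have := Finset.sum_le_sum hall
      rw [hrr] at this
      omega
    · -- B4
      have hall : ∀ l ∈ Finset.univ, rr l ≤ q l := by
        intro l _
        rcases eq_or_ne l j with rfl | hl
        · have := hm l; omega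
        · exact hqr l (Finset.mem_erase.mpr ⟨hl, Finset.mem_univ l⟩)
      have := Finset.sum_le_sum hall
      rw [hrr] at this
      omega
    · -- B5
      have hall : ∀ l ∈ Finset.univ, rr l ≤ q l := by
        intro l _
        rcases eq_or_ne l j with rfl | hl
        · have := hrm l; omega
        · exact hqr l (Finset.mem_erase.mpr ⟨hl, Finset.mem_univ l⟩)
      have := Finset.sum_le_sum hall
      rw [hrr] at this
      omega
end

section
/- Let m ≥ 1 and d ≥ 1. Consider the ℂ-linear map Φ from the space of homogeneous polynomials of degree d in ℂ[x_0,…,x_m] sending f to the tuple of its eigen-minors (M_{ij}(f))_{0 ≤ i < j ≤ m}. Then the dimension of the image of Φ equals binom(d+m, m) if d is odd, and binom(d+m, m) − 1 if d is even. (Projectivizing, this gives the dimension binom(d+m,d) − 1, respectively binom(d+m,d) − 2, of the image of the eigenscheme map τ in Theorem A.) -/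
open MvPolynomial

namespace EigenAux

variable {m : ℕ}

noncomputable def qq (m : ℕ) : MvPolynomial (Fin (m + 1)) ℂ := ∑ i, X i ^ 2

lemma deg_eq (v : Fin (m + 1) →₀ ℕ) : v.degree = ∑ i, v i := by
  rw [Finsupp.degree]
  exact Finset.sum_subset (Finset.subset_univ _)
    (fun i _ h => Finsupp.notMem_support_iff.mp h)

lemma coeff_deg {f : MvPolynomial (Fin (m + 1)) ℂ} {n : ℕ} (hf : f.IsHomogeneous n)
    {v : Fin (m + 1) →₀ ℕ} (hv : coeff v f ≠ 0) : v.degree = n := by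
  have := hf hv
  rwa [Finsupp.degree_eq_weight_one]

lemma euler_mono (v : Fin (m + 1) →₀ ℕ) (a : ℂ) :
    ∑ i, X i * pderiv i (monomial v a) = (v.degree : MvPolynomial (Fin (m + 1)) ℂ) * monomial v a := by
  have h1 : ∀ i : Fin (m + 1), X i * pderiv i (monomial v a) = monomial v (a * v i) := by
    intro i
    rw [pderiv_monomial]
    by_cases h : v i = 0
    · simp [h]
    · rw [X, monomial_mul, one_mul]
      have hv : (Finsupp.single i 1) + (v - Finsupp.single i 1) = v :=
        add_tsub_cancel_of_le (Finsupp.single_le_iff.mpr (Nat.one_le_iff_ne_zero.mpr h))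
      exact congrArg (fun w => (monomial w) (a * ((v i : ℕ) : ℂ))) hv
  simp only [h1]
  rw [← map_sum, ← Finset.mul_sum]
  have h2 : (monomial v) (a * ∑ i, ((v i : ℂ))) = (v.degree : ℂ) • monomial v a := by
    rw [smul_monomial, smul_eq_mul, mul_comm, deg_eq]
    push_cast
    rfl
  rw [h2, smul_eq_C_mul, map_natCast]

lemma euler {d : ℕ} {f : MvPolynomial (Fin (m + 1)) ℂ} (hf : f.IsHomogeneous d) :
    ∑ i, X i * pderiv i f = (d : MvPolynomial (Fin (m + 1)) ℂ) * f := by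
  conv_lhs => rw [f.as_sum]
  conv_rhs => rw [f.as_sum]
  simp only [map_sum, Finset.mul_sum]
  rw [Finset.sum_comm]
  refine Finset.sum_congr rfl fun v hv => ?_
  rw [euler_mono, coeff_deg hf (mem_support_iff.mp hv)]

lemma isHom_pderiv {n : ℕ} {f : MvPolynomial (Fin (m + 1)) ℂ} (hf : f.IsHomogeneous n)
    (i : Fin (m + 1)) : (pderiv i f).IsHomogeneous (n - 1) := by
  have : pderiv i f = ∑ v ∈ f.support, pderiv i (monomial v (coeff v f)) := by
    rw [← map_sum, ← f.as_sum]
  rw [this, ← mem_homogeneousSubmodule]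
  refine Submodule.sum_mem _ fun v hv => ?_
  rw [mem_homogeneousSubmodule, pderiv_monomial]
  by_cases h : v i = 0
  · simp [h]
    exact isHomogeneous_zero _ _ _
  · apply isHomogeneous_monomial
    have hdeg : v.degree = n := coeff_deg hf (mem_support_iff.mp hv)
    have h1 : (v - Finsupp.single i 1) + Finsupp.single i 1 = v :=
      tsub_add_cancel_of_le (Finsupp.single_le_iff.mpr (Nat.one_le_iff_ne_zero.mpr h))
    have h2 : (v - Finsupp.single i 1).degree + (Finsupp.single i 1).degree = v.degree := by
      rw [← h1]; simp [deg_eq, Finset.sum_add_distrib]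
    have h3 : (Finsupp.single i 1).degree = 1 := by
      simp [deg_eq, Finsupp.single_apply]
    omega

lemma qq_hom : (qq m).IsHomogeneous 2 := by
  rw [qq, ← mem_homogeneousSubmodule]
  refine Submodule.sum_mem _ fun i _ => ?_
  rw [mem_homogeneousSubmodule]
  simpa using (isHomogeneous_X ℂ i).pow 2

lemma qq_ne : (qq m) ≠ 0 := by
  intro h
  have := congrArg (eval fun _ => (1 : ℂ)) h
  simp [qq] at this
  exact absurd this (by exact_mod_cast Nat.succ_ne_zero m)

lemma pderiv_qq (j : Fin (m + 1)) : pderiv j (qq m) = 2 * X j := by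
  rw [qq, map_sum]
  rw [Finset.sum_eq_single j]
  · rw [pderiv_pow, pderiv_X_self]; ring
  · intro i _ hij
    rw [pderiv_pow, pderiv_X_of_ne hij]; ring
  · simp

lemma minors_qq_pow (k : ℕ) (i j : Fin (m + 1)) :
    X j * pderiv i ((qq m) ^ k) = X i * pderiv j ((qq m) ^ k) := by
  rw [pderiv_pow, pderiv_pow, pderiv_qq, pderiv_qq]
  ring

end EigenAux

namespace EigenAux

lemma pderiv_natCast (j : Fin (m + 1)) (n : ℕ) :
    pderiv j ((n : MvPolynomial (Fin (m + 1)) ℂ)) = 0 := by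
  rw [← map_natCast (C : ℂ →+* MvPolynomial (Fin (m + 1)) ℂ) n, pderiv_C]

lemma key (hm : 1 ≤ m) : ∀ d : ℕ, ∀ f : MvPolynomial (Fin (m + 1)) ℂ, f.IsHomogeneous d →
    (∀ i j, X j * pderiv i f = X i * pderiv j f) →
    (Odd d → f = 0) ∧ (Even d → ∃ c : ℂ, f = c • (qq m) ^ (d / 2)) := by
  intro d
  induction d using Nat.strong_induction_on with
  | _ d IH =>
  intro f hf hc
  rcases Nat.eq_zero_or_pos d with rfl | hd1
  · constructor
    · intro h; exact absurd h (by simp)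
    · intro _
      refine ⟨coeff 0 f, ?_⟩
      have hfC : f = C (coeff 0 f) := by
        ext v
        rcases eq_or_ne v 0 with rfl | hv
        · simp
        · rw [hf.coeff_eq_zero (by rwa [Ne, Finsupp.degree_eq_zero_iff]), coeff_C,
            if_neg (Ne.symm hv)]
      conv_lhs => rw [hfC]
      rw [Nat.zero_div, pow_zero, smul_eq_C_mul, mul_one]
  · set Δ : MvPolynomial (Fin (m + 1)) ℂ := ∑ j, pderiv j (pderiv j f) with hΔdef
    have hΔhom : Δ.IsHomogeneous (d - 2) := by
      rw [← mem_homogeneousSubmodule]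
      refine Submodule.sum_mem _ fun j _ => ?_
      rw [mem_homogeneousSubmodule]
      have h2 := isHom_pderiv (isHom_pderiv hf j) j
      have : d - 1 - 1 = d - 2 := by omega
      rwa [this] at h2
    have hA : ∀ j, qq m * pderiv j f = (d : MvPolynomial (Fin (m + 1)) ℂ) * (X j * f) := by
      intro j
      have h1 : qq m * pderiv j f = ∑ i, X i * (X i * pderiv j f) := by
        rw [qq, Finset.sum_mul]
        exact Finset.sum_congr rfl fun i _ => by ring
      have h2 : ∀ i : Fin (m + 1), X i * (X i * pderiv j f) = X j * (X i * pderiv i f) := by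
        intro i
        rw [← hc i j]
        ring
      rw [h1, Finset.sum_congr rfl fun i _ => h2 i, ← Finset.mul_sum, euler hf]
      ring
    have hC : ∀ j, qq m * pderiv j (pderiv j f)
        = (d : MvPolynomial (Fin (m + 1)) ℂ) * f
          + ((d : MvPolynomial (Fin (m + 1)) ℂ) - 2) * (X j * pderiv j f) := by
      intro j
      have h1 := congrArg (pderiv j) (hA j)
      rw [pderiv_mul, pderiv_qq, pderiv_mul, pderiv_natCast, pderiv_mul, pderiv_X_self] at h1
      linear_combination h1
    have hB : qq m * Δ
        = (d : MvPolynomial (Fin (m + 1)) ℂ) * ((d : MvPolynomial (Fin (m + 1)) ℂ)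
            + (m : MvPolynomial (Fin (m + 1)) ℂ) - 1) * f := by
      rw [hΔdef, Finset.mul_sum, Finset.sum_congr rfl fun j _ => hC j,
        Finset.sum_add_distrib, Finset.sum_const, Finset.card_univ, Fintype.card_fin,
        ← Finset.mul_sum, euler hf, nsmul_eq_mul]
      push_cast
      ring
    set E : ℂ := (d : ℂ) * ((d : ℂ) + (m : ℂ) - 1) with hEdef
    have hcast : ((d - 1 + m : ℕ) : ℂ) = (d : ℂ) + (m : ℂ) - 1 := by
      rw [Nat.cast_add, Nat.cast_sub hd1]
      push_cast
      ring
    have hE0 : E ≠ 0 := by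
      apply mul_ne_zero
      · exact_mod_cast Nat.pos_iff_ne_zero.mp hd1
      · rw [← hcast]
        exact_mod_cast (by omega : d - 1 + m ≠ 0)
    have hCE : ((d : MvPolynomial (Fin (m + 1)) ℂ) * ((d : MvPolynomial (Fin (m + 1)) ℂ)
        + (m : MvPolynomial (Fin (m + 1)) ℂ) - 1)) = C E := by
      rw [hEdef]
      simp only [map_mul, map_sub, map_add, map_natCast, map_one]
    rw [hCE] at hB
    have hCEne : (C E : MvPolynomial (Fin (m + 1)) ℂ) ≠ 0 := by
      rwa [C_ne_zero]
    have hΔc : ∀ i j, X j * pderiv i Δ = X i * pderiv j Δ := by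
      intro i j
      have hdi := congrArg (pderiv i) hB
      have hdj := congrArg (pderiv j) hB
      rw [pderiv_mul, pderiv_qq, pderiv_mul, pderiv_C] at hdi hdj
      apply mul_left_cancel₀ (qq_ne (m := m))
      linear_combination X j * hdi - X i * hdj + C E * hc i j
    have hiH := IH (d - 2) (by omega) Δ hΔhom hΔc
    constructor
    · intro hodd
      have hf0 : C E * f = 0 → f = 0 := by
        intro h
        rcases mul_eq_zero.mp h with h | h
        · exact absurd h hCEne
        · exact h
      rcases eq_or_lt_of_le (Nat.one_le_iff_ne_zero.mpr hd1.ne') with h1 | h2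
      · -- d = 1
        obtain ⟨c, hcΔ⟩ := hiH.2 (by simp [← h1])
        rcases eq_or_ne c 0 with rfl | hcne
        · apply hf0
          rw [← hB, hcΔ, zero_smul, mul_zero]
        · exfalso
          have hqc : qq m * Δ = qq m * C c := by
            rw [hcΔ]
            have : (d - 2) / 2 = 0 := by omega
            rw [this, pow_zero, smul_eq_C_mul, mul_one]
          rw [hqc] at hB
          have hne : qq m * C c ≠ 0 :=
            mul_ne_zero qq_ne (C_ne_zero.mpr hcne)
          have h2' : (qq m * C c).IsHomogeneous 2 := by
            simpa using qq_hom.mul (isHomogeneous_C _ c)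
          have h1' : (C E * f).IsHomogeneous 1 := by
            have := (isHomogeneous_C (Fin (m + 1)) E).mul hf
            rwa [zero_add, ← h1] at this
          rw [hB] at h2'
          exact absurd (h2'.inj_right h1' (hB ▸ hne)) (by omega)
      · -- d ≥ 2, odd
        have hΔ0 : Δ = 0 := hiH.1 (by
          rcases hodd with ⟨t, ht⟩
          exact ⟨t - 1, by omega⟩)
        apply hf0
        rw [← hB, hΔ0, mul_zero]
    · intro heven
      have hev2 : Even (d - 2) := by
        rcases heven with ⟨t, ht⟩
        exact ⟨t - 1, by omega⟩
      obtain ⟨c, hcΔ⟩ := hiH.2 hev2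
      have hd2 : 2 ≤ d := by
        rcases heven with ⟨t, ht⟩
        omega
      have hk : (d - 2) / 2 + 1 = d / 2 := by omega
      refine ⟨E⁻¹ * c, ?_⟩
      apply mul_left_cancel₀ hCEne
      rw [← hB, hcΔ]
      rw [smul_eq_C_mul, smul_eq_C_mul]
      have hEc : (C E : MvPolynomial (Fin (m + 1)) ℂ) * (C (E⁻¹ * c) * qq m ^ (d / 2))
          = C c * qq m ^ (d / 2) := by
        rw [← mul_assoc, ← map_mul]
        congr 2
        field_simp
      rw [hEc, ← hk, pow_succ]
      ring

end EigenAux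

namespace EigenAux

noncomputable def degEquiv (m d : ℕ) : Sym (Fin (m + 1)) d ≃ ↑{v : Fin (m + 1) →₀ ℕ | v.degree = d} :=
  (Sym.equivNatSum (Fin (m + 1)) d).trans (Equiv.subtypeEquivRight fun v => by
    rw [Set.mem_setOf_eq, Finsupp.degree, Finsupp.sum]
    rfl)

noncomputable instance (m d : ℕ) : Fintype ↑{v : Fin (m + 1) →₀ ℕ | v.degree = d} :=
  Fintype.ofEquiv _ (degEquiv m d)

lemma card_deg (m d : ℕ) :
    Fintype.card ↑{v : Fin (m + 1) →₀ ℕ | v.degree = d} = (d + m).choose m := by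
  rw [← Fintype.card_congr (degEquiv m d), Sym.card_sym_eq_choose, Fintype.card_fin]
  have h1 : m + 1 + d - 1 = d + m := by omega
  rw [h1]
  have h2 := Nat.choose_symm (show m ≤ d + m from by omega)
  rwa [Nat.add_sub_cancel] at h2

instance (m d : ℕ) : FiniteDimensional ℂ ↥(homogeneousSubmodule (Fin (m + 1)) ℂ d) := by
  have h := homogeneousSubmodule_eq_finsupp_supported (Fin (m + 1)) ℂ d
  have e := (LinearEquiv.ofEq _ _ h).trans
    (AddMonoidAlgebra.supportedEquivFinsupp (S := ℂ) (R := ℂ) {v : Fin (m + 1) →₀ ℕ | v.degree = d})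
  exact Module.Finite.equiv e.symm

lemma finrank_hs (m d : ℕ) :
    Module.finrank ℂ ↥(homogeneousSubmodule (Fin (m + 1)) ℂ d) = (d + m).choose m := by
  have h := homogeneousSubmodule_eq_finsupp_supported (Fin (m + 1)) ℂ d
  rw [(LinearEquiv.ofEq _ _ h).finrank_eq]
  have h2 := (AddMonoidAlgebra.supportedEquivFinsupp (S := ℂ) (R := ℂ)
    {v : Fin (m + 1) →₀ ℕ | v.degree = d}).finrank_eq
  rw [Module.finrank_finsupp_self, card_deg] at h2
  exact h2

theorem main (m d : ℕ) (hm : 1 ≤ m) (hd : 1 ≤ d) :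
    Module.finrank ℂ (LinearMap.range
      ((LinearMap.pi fun p : {p : Fin (m + 1) × Fin (m + 1) // p.1 < p.2} =>
        LinearMap.mulLeft ℂ (X p.1.2) ∘ₗ (pderiv p.1.1).toLinearMap
          - LinearMap.mulLeft ℂ (X p.1.1) ∘ₗ (pderiv p.1.2).toLinearMap) ∘ₗ
        (homogeneousSubmodule (Fin (m + 1)) ℂ d).subtype)) =
      if Odd d then (d + m).choose m else (d + m).choose m - 1 := by
  set Φ : ↥(homogeneousSubmodule (Fin (m + 1)) ℂ d) →ₗ[ℂ]
      ({p : Fin (m + 1) × Fin (m + 1) // p.1 < p.2} → MvPolynomial (Fin (m + 1)) ℂ) :=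
    (LinearMap.pi fun p : {p : Fin (m + 1) × Fin (m + 1) // p.1 < p.2} =>
        LinearMap.mulLeft ℂ (X p.1.2) ∘ₗ (pderiv p.1.1).toLinearMap
          - LinearMap.mulLeft ℂ (X p.1.1) ∘ₗ (pderiv p.1.2).toLinearMap) ∘ₗ
        (homogeneousSubmodule (Fin (m + 1)) ℂ d).subtype with hΦ
  have hker : ∀ v : ↥(homogeneousSubmodule (Fin (m + 1)) ℂ d), v ∈ LinearMap.ker Φ ↔
      ∀ i j : Fin (m + 1), X j * pderiv i (v : MvPolynomial (Fin (m + 1)) ℂ)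
        = X i * pderiv j (v : MvPolynomial (Fin (m + 1)) ℂ) := by
    intro v
    have h1 : v ∈ LinearMap.ker Φ ↔ ∀ p : {p : Fin (m + 1) × Fin (m + 1) // p.1 < p.2},
        X p.1.2 * pderiv p.1.1 (v : MvPolynomial (Fin (m + 1)) ℂ)
          = X p.1.1 * pderiv p.1.2 (v : MvPolynomial (Fin (m + 1)) ℂ) := by
      rw [LinearMap.mem_ker, hΦ, funext_iff]
      apply forall_congr'
      intro p
      rw [LinearMap.comp_apply, LinearMap.pi_apply, LinearMap.sub_apply,
        LinearMap.comp_apply, LinearMap.comp_apply, LinearMap.mulLeft_apply,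
        LinearMap.mulLeft_apply, Submodule.coe_subtype]
      rw [Pi.zero_apply, sub_eq_zero]
      rfl
    rw [h1]
    constructor
    · intro h i j
      rcases lt_trichotomy i j with hij | rfl | hij
      · exact h ⟨(i, j), hij⟩
      · rfl
      · exact (h ⟨(j, i), hij⟩).symm
    · intro h p
      exact h p.1.1 p.1.2
  have hrn := LinearMap.finrank_range_add_finrank_ker Φ
  rw [finrank_hs] at hrn
  by_cases hodd : Odd d
  · have hkbot : LinearMap.ker Φ = ⊥ := by
      rw [Submodule.eq_bot_iff]
      intro v hv
      have hhom : (v : MvPolynomial (Fin (m + 1)) ℂ).IsHomogeneous d :=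
        (mem_homogeneousSubmodule _ _).mp v.2
      have h0 := (key hm d _ hhom ((hker v).mp hv)).1 hodd
      exact Subtype.ext h0
    rw [hkbot, finrank_bot] at hrn
    rw [if_pos hodd]
    omega
  · have heven : Even d := Nat.not_odd_iff_even.mp hodd
    have hqd : (qq m ^ (d / 2)).IsHomogeneous d := by
      have h := (qq_hom (m := m)).pow (d / 2)
      have h2 : 2 * (d / 2) = d := by
        rcases heven with ⟨t, ht⟩
        omega
      rwa [h2] at h
    set qd : ↥(homogeneousSubmodule (Fin (m + 1)) ℂ d) :=
      ⟨qq m ^ (d / 2), (mem_homogeneousSubmodule _ _).mpr hqd⟩ with hqddef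
    have hqdne : qd ≠ 0 := by
      simp only [hqddef, ne_eq, Submodule.mk_eq_zero]
      exact pow_ne_zero _ qq_ne
    have hkspan : LinearMap.ker Φ = Submodule.span ℂ {qd} := by
      apply le_antisymm
      · intro v hv
        have hhom : (v : MvPolynomial (Fin (m + 1)) ℂ).IsHomogeneous d :=
          (mem_homogeneousSubmodule _ _).mp v.2
        obtain ⟨c, hcv⟩ := (key hm d _ hhom ((hker v).mp hv)).2 heven
        rw [Submodule.mem_span_singleton]
        refine ⟨c, Subtype.ext ?_⟩
        rw [Submodule.coe_smul, hqddef]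
        exact hcv.symm
      · rw [Submodule.span_le, Set.singleton_subset_iff, SetLike.mem_coe, hker]
        intro i j
        exact minors_qq_pow (d / 2) i j
    rw [hkspan, finrank_span_singleton hqdne] at hrn
    rw [if_neg hodd]
    have hpos : 1 ≤ (d + m).choose m := Nat.choose_pos (by omega)
    omega

end EigenAux



open MvPolynomial

theorem rank_eigenminor_map (m d : ℕ) (hm : 1 ≤ m) (hd : 1 ≤ d) :
    letI Φ : (homogeneousSubmodule (Fin (m + 1)) ℂ d) →ₗ[ℂ]
        ({p : Fin (m + 1) × Fin (m + 1) // p.1 < p.2} → MvPolynomial (Fin (m + 1)) ℂ) :=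
      (LinearMap.pi fun p : {p : Fin (m + 1) × Fin (m + 1) // p.1 < p.2} =>
        LinearMap.mulLeft ℂ (X p.1.2) ∘ₗ (pderiv p.1.1).toLinearMap
          - LinearMap.mulLeft ℂ (X p.1.1) ∘ₗ (pderiv p.1.2).toLinearMap) ∘ₗ
        (homogeneousSubmodule (Fin (m + 1)) ℂ d).subtype
    Module.finrank ℂ (LinearMap.range Φ) =
      if Odd d then (d + m).choose m else (d + m).choose m - 1 := by
  exact EigenAux.main m d hm hd
end
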